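/- arXiv:math/0411444 — 10 statements merged into one kernel-verified Lean document; each statement's English description precedes it below -/
import Mathlib

section
/- Let d1, d2 be coprime integers with 1 < d1 < d2, and let Δ(d1,d2) be the (finite) set of integers not representable as nonnegative integer combinations of d1 and d2. Then the sum of the elements of Δ(d1,d2) equals (1/12)(d1−1)(d2−1)(2·d1·d2 − d1 − d2 − 1). -/
theorem myGaussIcc (m : ℕ) : 2 * ∑ k ∈ Finset.Icc 1 m, (k:ℤ) = m*(m+1) := by
  induction m with
  | zero => simp
  | succ p ih =>
    rw [Finset.sum_Icc_succ_top (by omega)]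
    push_cast
    push_cast at ih
    linarith

theorem myGauss1 (n : ℕ) : 2 * ∑ j ∈ Finset.Ico 1 n, (j:ℤ) = n*(n-1) := by
  induction n with
  | zero => simp
  | succ p ih =>
    rcases Nat.eq_zero_or_pos p with h0 | h0
    · subst h0; simp
    rw [Finset.sum_Ico_succ_top (by omega)]
    push_cast
    push_cast at ih
    linarith

theorem myGauss2 (n : ℕ) : 6 * ∑ j ∈ Finset.Ico 1 n, (j:ℤ)^2 = n*(n-1)*(2*n-1) := by
  induction n with
  | zero => simp
  | succ p ih =>
    rcases Nat.eq_zero_or_pos p with h0 | h0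
    · subst h0; simp
    rw [Finset.sum_Ico_succ_top (by omega)]
    push_cast
    push_cast at ih
    ring_nf
    ring_nf at ih
    linarith

theorem myPermSum (d1 d2 : ℕ) (h1 : 1 < d1) (hcop : Nat.gcd d1 d2 = 1) (g : ℕ → ℤ) :
    ∑ j ∈ Finset.Ico 1 d1, g ((j * d2) % d1) = ∑ j ∈ Finset.Ico 1 d1, g j := by
  have hd1 : 0 < d1 := by omega
  have hmaps : ∀ j ∈ Finset.Ico 1 d1, (j * d2) % d1 ∈ Finset.Ico 1 d1 := by
    intro j hj
    simp only [Finset.mem_Ico] at hj ⊢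
    refine ⟨?_, Nat.mod_lt _ hd1⟩
    rcases Nat.eq_zero_or_pos ((j * d2) % d1) with h0 | h0
    · exfalso
      have hdvd : d1 ∣ j * d2 := Nat.dvd_of_mod_eq_zero h0
      have : d1 ∣ j := (Nat.Coprime.dvd_of_dvd_mul_right hcop hdvd)
      have := Nat.le_of_dvd (by omega) this
      omega
    · exact h0
  have hinj : ∀ a ∈ Finset.Ico 1 d1, ∀ b ∈ Finset.Ico 1 d1,
      (a * d2) % d1 = (b * d2) % d1 → a = b := by
    intro a ha b hb h
    simp only [Finset.mem_Ico] at ha hb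
    have hmod : a * d2 ≡ b * d2 [MOD d1] := h
    have : a ≡ b [MOD d1] :=
      Nat.ModEq.cancel_right_of_coprime hcop hmod
    have := this.eq_of_lt_of_lt (by omega) (by omega)
    exact this
  have himg : Finset.image (fun j => (j * d2) % d1) (Finset.Ico 1 d1) = Finset.Ico 1 d1 := by
    apply Finset.eq_of_subset_of_card_le
    · intro x hx
      obtain ⟨j, hj, rfl⟩ := Finset.mem_image.mp hx
      exact hmaps j hj
    · rw [Finset.card_image_of_injOn hinj]
  conv_rhs => rw [← himg]
  rw [Finset.sum_image hinj]

theorem myGapIff (d1 d2 : ℕ) (h1 : 1 < d1) (hcop : Nat.gcd d1 d2 = 1) (s : ℕ) :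
    (¬ ∃ x1 x2 : ℕ, s = x1 * d1 + x2 * d2) ↔
    ∃ j ∈ Finset.Ico 1 d1, ∃ k ∈ Finset.Icc 1 (j * d2 / d1), s = j * d2 - k * d1 := by
  have hd1 : 0 < d1 := by omega
  haveI : NeZero d1 := ⟨by omega⟩
  have hcop' : Nat.Coprime d2 d1 := (show Nat.Coprime d1 d2 from hcop).symm
  constructor
  · intro hs
    set u : (ZMod d1)ˣ := ZMod.unitOfCoprime d2 hcop' with hu
    set j : ℕ := ((s : ZMod d1) * ((u⁻¹ : (ZMod d1)ˣ) : ZMod d1)).val with hjdef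
    have hj_lt : j < d1 := ZMod.val_lt _
    have hjcast : (j : ZMod d1) = (s : ZMod d1) * ((u⁻¹ : (ZMod d1)ˣ) : ZMod d1) := by
      rw [hjdef, ZMod.natCast_val, ZMod.cast_id]
    have hmod : j * d2 ≡ s [MOD d1] := by
      rw [← ZMod.natCast_eq_natCast_iff]
      push_cast
      rw [hjcast, show ((d2 : ZMod d1)) = (u : ZMod d1) from (ZMod.coe_unitOfCoprime d2 hcop').symm]
      rw [mul_assoc, Units.inv_mul, mul_one]
    have hj1 : 1 ≤ j := by
      rcases Nat.eq_zero_or_pos j with h0 | h0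
      · exfalso
        apply hs
        have : 0 ≡ s [MOD d1] := by simpa [h0] using hmod
        have hdvd : d1 ∣ s := (Nat.modEq_zero_iff_dvd.mp this.symm)
        exact ⟨s / d1, 0, by rw [Nat.div_mul_cancel hdvd]; ring⟩
      · exact h0
    have hlt : s < j * d2 := by
      by_contra hge
      push_neg at hge
      apply hs
      have hdvd : d1 ∣ s - j * d2 := (Nat.modEq_iff_dvd' hge).mp hmod
      obtain ⟨t, ht⟩ := hdvd
      rw [mul_comm d1 t] at ht
      exact ⟨t, j, by omega⟩
    have hdvd : d1 ∣ j * d2 - s := (Nat.modEq_iff_dvd' (le_of_lt hlt)).mp hmod.symm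
    obtain ⟨k, hk⟩ := hdvd
    rw [mul_comm d1 k] at hk
    refine ⟨j, Finset.mem_Ico.mpr ⟨hj1, hj_lt⟩, k, Finset.mem_Icc.mpr ⟨?_, ?_⟩, by omega⟩
    · rcases Nat.eq_zero_or_pos k with h0 | h0
      · exfalso; subst h0; simp at hk; omega
      · exact h0
    · rw [Nat.le_div_iff_mul_le hd1]
      omega
  · rintro ⟨j, hj, k, hk, rfl⟩ ⟨x1, x2, hrep⟩
    simp only [Finset.mem_Ico] at hj
    simp only [Finset.mem_Icc] at hk
    have hkd : k * d1 ≤ j * d2 := by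
      have := hk.2
      rw [Nat.le_div_iff_mul_le hd1] at this
      exact this
    have heq : x1 * d1 + x2 * d2 + k * d1 = j * d2 := by omega
    have hmod : x2 * d2 ≡ j * d2 [MOD d1] := by
      unfold Nat.ModEq
      conv_rhs => rw [← heq]
      rw [show x1 * d1 + x2 * d2 + k * d1 = x2 * d2 + (x1 + k) * d1 by ring]
      rw [Nat.add_mul_mod_self_right]
    have hx2j : x2 ≡ j [MOD d1] := Nat.ModEq.cancel_right_of_coprime hcop hmod
    have hjx2 : j ≤ x2 := by
      have : x2 % d1 = j % d1 := hx2j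
      rw [Nat.mod_eq_of_lt hj.2] at this
      have := Nat.mod_le x2 d1
      omega
    have h1' : j * d2 ≤ x2 * d2 := Nat.mul_le_mul_right d2 hjx2
    have : x2 * d2 ≤ j * d2 - k * d1 := by omega
    have hkpos : 1 ≤ k * d1 := by
      have := hk.1
      exact Nat.one_le_iff_ne_zero.mpr (by positivity)
    omega

theorem key_j (d1 d2 j : ℕ) :
    (d1:ℤ)^2 * (12 * ∑ k ∈ Finset.Icc 1 (j*d2/d1), ((j:ℤ)*(d2:ℤ) - (k:ℤ)*(d1:ℤ))) =
    6*(d1:ℤ)*((d2:ℤ)^2*(j:ℤ)^2 - ((j*d2 % d1 : ℕ):ℤ)^2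
      - (d1:ℤ)*(d2:ℤ)*(j:ℤ) + (d1:ℤ)*((j*d2 % d1 : ℕ):ℤ)) := by
  set m := j*d2/d1 with hm
  set r := j*d2 % d1 with hr
  have hmr : (d1:ℤ)*(m:ℤ) + (r:ℤ) = (j:ℤ)*(d2:ℤ) := by
    exact_mod_cast congrArg (Nat.cast : ℕ → ℤ) (Nat.div_add_mod (j*d2) d1)
  have hsum : ∑ k ∈ Finset.Icc 1 m, ((j:ℤ)*(d2:ℤ) - (k:ℤ)*(d1:ℤ))
      = (m:ℤ)*((j:ℤ)*(d2:ℤ)) - (d1:ℤ) * ∑ k ∈ Finset.Icc 1 m, (k:ℤ) := by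
    rw [Finset.sum_sub_distrib, Finset.sum_const, Nat.card_Icc, Finset.mul_sum]
    simp [Finset.sum_mul, mul_comm]
  have hG := myGaussIcc m
  rw [hsum]
  linear_combination (-6*(d1:ℤ)^3) * hG +
    6*(d1:ℤ)*(-(d1:ℤ)*(m:ℤ) + (j:ℤ)*(d2:ℤ) - (d1:ℤ) + (r:ℤ)) * hmr

theorem power_sum_one_two_generators (d1 d2 : ℕ) (h1 : 1 < d1) (h12 : d1 < d2)
    (hcop : Nat.gcd d1 d2 = 1)
    (hfin : {s : ℕ | ¬ ∃ x1 x2 : ℕ, s = x1 * d1 + x2 * d2}.Finite) :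
    (12 : ℤ) * ∑ s ∈ hfin.toFinset, (s : ℤ) =
      ((d1 : ℤ) - 1) * ((d2 : ℤ) - 1) *
        (2 * (d1 : ℤ) * (d2 : ℤ) - (d1 : ℤ) - (d2 : ℤ) - 1) := by
  have hd1 : 0 < d1 := by omega
  set D := (Finset.Ico 1 d1).sigma (fun j => Finset.Icc 1 (j * d2 / d1)) with hD
  have hbound : ∀ p : (_ : ℕ) × ℕ, p ∈ D → p.2 * d1 ≤ p.1 * d2 := by
    rintro ⟨j, k⟩ hp
    rw [hD, Finset.mem_sigma, Finset.mem_Ico, Finset.mem_Icc] at hp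
    have := hp.2.2
    rw [Nat.le_div_iff_mul_le hd1] at this
    exact this
  have hset : hfin.toFinset = D.image (fun p => p.1 * d2 - p.2 * d1) := by
    ext s
    simp only [Set.Finite.mem_toFinset, Set.mem_setOf_eq, Finset.mem_image]
    rw [myGapIff d1 d2 h1 hcop s]
    constructor
    · rintro ⟨j, hj, k, hk, rfl⟩
      exact ⟨⟨j, k⟩, by rw [hD, Finset.mem_sigma]; exact ⟨hj, hk⟩, rfl⟩
    · rintro ⟨⟨j, k⟩, hp, rfl⟩
      rw [hD, Finset.mem_sigma] at hp
      exact ⟨j, hp.1, k, hp.2, rfl⟩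
  have hinj : ∀ p ∈ D, ∀ q ∈ D, p.1 * d2 - p.2 * d1 = q.1 * d2 - q.2 * d1 → p = q := by
    rintro ⟨j, k⟩ hp ⟨j', k'⟩ hq h
    have hb1 := hbound _ hp
    have hb2 := hbound _ hq
    simp only at hb1 hb2 h
    rw [hD, Finset.mem_sigma, Finset.mem_Ico, Finset.mem_Icc] at hp hq
    have hz : (j:ℤ) * d2 - k * d1 = (j':ℤ) * d2 - k' * d1 := by
      have := congrArg (Nat.cast : ℕ → ℤ) h
      push_cast [Nat.cast_sub hb1, Nat.cast_sub hb2] at this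
      exact this
    have hdvd : (d1:ℤ) ∣ ((j:ℤ) - j') * d2 := ⟨(k:ℤ) - k', by linarith⟩
    have hco : IsCoprime (d1:ℤ) (d2:ℤ) := by
      rw [Int.isCoprime_iff_gcd_eq_one]
      exact_mod_cast hcop
    have hdj : (d1:ℤ) ∣ ((j:ℤ) - j') := hco.dvd_of_dvd_mul_right hdvd
    have hjj : (j:ℤ) = j' := by
      by_contra hne
      have hpos : 0 < |(j:ℤ) - j'| := by
        rw [abs_pos]; intro hc; apply hne; linarith
      have := Int.le_of_dvd hpos ((dvd_abs _ _).mpr hdj)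
      have hja : |(j:ℤ) - j'| < d1 := by
        have h2j : j < d1 := hp.1.2
        have h2j' : j' < d1 := hq.1.2
        rw [abs_lt]
        constructor <;> push_cast <;> omega
      omega
    have hj : j = j' := by exact_mod_cast hjj
    subst hj
    have hkk : (k:ℤ) = k' := by
      have hd1z : (d1:ℤ) ≠ 0 := by positivity
      have : (k:ℤ) * d1 = (k':ℤ) * d1 := by linarith
      exact mul_right_cancel₀ hd1z this
    have : k = k' := by exact_mod_cast hkk
    subst this
    rfl
  rw [hset, Finset.sum_image hinj, hD, Finset.sum_sigma]
  have hcast : ∀ j ∈ Finset.Ico 1 d1,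
      ∑ k ∈ Finset.Icc 1 (j * d2 / d1), ((j * d2 - k * d1 : ℕ) : ℤ)
      = ∑ k ∈ Finset.Icc 1 (j * d2 / d1), ((j:ℤ)*(d2:ℤ) - (k:ℤ)*(d1:ℤ)) := by
    intro j hj
    apply Finset.sum_congr rfl
    intro k hk
    have hb : k * d1 ≤ j * d2 := by
      rw [Finset.mem_Icc] at hk
      have := hk.2
      rw [Nat.le_div_iff_mul_le hd1] at this
      exact this
    push_cast [Nat.cast_sub hb]
    ring
  rw [Finset.sum_congr rfl hcast]
  -- now goal: 12 * ∑ j ∈ Ico 1 d1, ∑ k ∈ Icc 1 (j*d2/d1), ((j:ℤ)*d2 - k*d1) = RHS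
  set S := ∑ j ∈ Finset.Ico 1 d1, ∑ k ∈ Finset.Icc 1 (j * d2 / d1),
    ((j:ℤ)*(d2:ℤ) - (k:ℤ)*(d1:ℤ)) with hS
  have hd1z : ((d1:ℤ))^2 ≠ 0 := by positivity
  apply mul_left_cancel₀ hd1z
  have hL : (d1:ℤ)^2 * (12 * S) =
      ∑ j ∈ Finset.Ico 1 d1, (d1:ℤ)^2 * (12 * ∑ k ∈ Finset.Icc 1 (j * d2 / d1),
        ((j:ℤ)*(d2:ℤ) - (k:ℤ)*(d1:ℤ))) := by
    rw [hS, Finset.mul_sum, Finset.mul_sum]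
  rw [hL, Finset.sum_congr rfl (fun j _ => key_j d1 d2 j)]
  have hsplit : ∑ j ∈ Finset.Ico 1 d1, 6*(d1:ℤ)*((d2:ℤ)^2*(j:ℤ)^2 - ((j*d2 % d1 : ℕ):ℤ)^2
      - (d1:ℤ)*(d2:ℤ)*(j:ℤ) + (d1:ℤ)*((j*d2 % d1 : ℕ):ℤ))
      = 6*(d1:ℤ)*((d2:ℤ)^2 * (∑ j ∈ Finset.Ico 1 d1, (j:ℤ)^2)
        - (∑ j ∈ Finset.Ico 1 d1, ((j*d2 % d1 : ℕ):ℤ)^2)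
        - (d1:ℤ)*(d2:ℤ) * (∑ j ∈ Finset.Ico 1 d1, (j:ℤ))
        + (d1:ℤ) * (∑ j ∈ Finset.Ico 1 d1, ((j*d2 % d1 : ℕ):ℤ))) := by
    simp only [Finset.sum_add_distrib, Finset.sum_sub_distrib, ← Finset.mul_sum]
  rw [hsplit]
  rw [myPermSum d1 d2 h1 hcop (fun x => (x:ℤ)^2), myPermSum d1 d2 h1 hcop (fun x => (x:ℤ))]
  have hA := myGauss1 d1
  have hB := myGauss2 d1
  linear_combination ((d1:ℤ)*((d2:ℤ)^2-1)) * hB - (3*(d1:ℤ)^2*((d2:ℤ)-1)) * hA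
end

section
/- Let d1, d2 be coprime integers with 1 < d1 < d2, and let Δ(d1,d2) be the set of nonrepresentable integers. Then the sum of squares of the elements of Δ(d1,d2) equals (1/12)(d1−1)(d2−1)·d1·d2·(d1·d2 − d1 − d2). -/
private lemma sum_range_id' (n : ℕ) : 2 * ∑ y ∈ Finset.range n, (y : ℤ) = n * (n - 1) := by
  induction n with
  | zero => simp
  | succ n ih =>
    rw [Finset.sum_range_succ]
    push_cast
    push_cast at ih
    linear_combination ih

private lemma sum_range_sq' (n : ℕ) :
    6 * ∑ y ∈ Finset.range n, (y : ℤ) ^ 2 = n * (n - 1) * (2 * n - 1) := by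
  induction n with
  | zero => simp
  | succ n ih =>
    rw [Finset.sum_range_succ]
    push_cast
    push_cast at ih
    linear_combination ih

private lemma sum_Ico_eq_sum_range_aux (f : ℕ → ℤ) (hf : f 0 = 0) (n : ℕ) :
    ∑ y ∈ Finset.Ico 1 n, f y = ∑ y ∈ Finset.range n, f y := by
  cases n with
  | zero => simp
  | succ n =>
    have h := Finset.sum_eq_sum_Ico_succ_bot (show 0 < n + 1 by omega) f
    rw [Finset.range_eq_Ico, h, hf, zero_add]

private lemma sum_Ico_id' (n : ℕ) : 2 * ∑ y ∈ Finset.Ico 1 n, (y : ℤ) = n * (n - 1) := by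
  rw [sum_Ico_eq_sum_range_aux _ (by simp)]; exact sum_range_id' n

private lemma sum_Ico_sq' (n : ℕ) :
    6 * ∑ y ∈ Finset.Ico 1 n, (y : ℤ) ^ 2 = n * (n - 1) * (2 * n - 1) := by
  rw [sum_Ico_eq_sum_range_aux _ (by simp)]; exact sum_range_sq' n

/-- The key bijection: pairs (y,z) with 1 ≤ y < a, 1 ≤ z < b and z*a < y*b biject onto
the nonrepresentable set via (y,z) ↦ y*b - z*a. -/
private lemma gap_sum_aux (a b : ℕ) (ha : 1 < a) (hb : 1 < b) (hcop : Nat.gcd a b = 1)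
    (D : Finset ℕ) (hD : ∀ s, s ∈ D ↔ ¬∃ x1 x2 : ℕ, s = x1 * a + x2 * b) :
    ∑ p ∈ (Finset.Ico 1 a ×ˢ Finset.Ico 1 b).filter (fun p => p.2 * a < p.1 * b),
      ((p.1 * b - p.2 * a : ℕ) : ℤ) ^ 2 = ∑ s ∈ D, (s : ℤ) ^ 2 := by
  refine Finset.sum_bij (fun p _ => p.1 * b - p.2 * a) ?_ ?_ ?_ ?_
  · -- maps into D : nonrepresentability
    rintro ⟨y, z⟩ hp
    simp only [Finset.mem_filter, Finset.mem_product, Finset.mem_Ico] at hp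
    obtain ⟨⟨⟨hy1, hy2⟩, hz1, hz2⟩, hlt⟩ := hp
    rw [hD]
    rintro ⟨x1, x2, hx⟩
    dsimp only at hx
    -- y*b = (x1+z)*a + x2*b
    have hxa : (x1 + z) * a = x1 * a + z * a := Nat.add_mul _ _ _
    have hx2y : x2 < y := by
      by_contra hcon
      push_neg at hcon
      have h1 : y * b ≤ x2 * b := Nat.mul_le_mul_right b hcon
      have h2 : 0 < (x1 + z) * a := Nat.mul_pos (by omega) (by omega)
      omega
    have hsub : (y - x2) * b = y * b - x2 * b := Nat.sub_mul y x2 b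
    have heq : (y - x2) * b = (x1 + z) * a := by omega
    have hdvd : a ∣ (y - x2) * b := ⟨x1 + z, by rw [heq, Nat.mul_comm]⟩
    have hdvd' : a ∣ y - x2 := (Nat.Coprime.dvd_of_dvd_mul_right hcop hdvd)
    have hpos : 0 < y - x2 := by omega
    have := Nat.le_of_dvd hpos hdvd'
    omega
  · -- injectivity
    rintro ⟨y, z⟩ hp ⟨y', z'⟩ hp' hpq
    dsimp only at hpq
    simp only [Finset.mem_filter, Finset.mem_product, Finset.mem_Ico] at hp hp'
    obtain ⟨⟨⟨hy1, hy2⟩, hz1, hz2⟩, hlt⟩ := hp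
    obtain ⟨⟨⟨hy1', hy2'⟩, hz1', hz2'⟩, hlt'⟩ := hp'
    have heq : y * b + z' * a = y' * b + z * a := by omega
    have hint : ((y : ℤ) - y') * b = ((z : ℤ) - z') * a := by
      have h := heq; zify at h; linear_combination h
    have hc : IsCoprime (a : ℤ) (b : ℤ) := by
      rw [Int.isCoprime_iff_gcd_eq_one]
      simpa using hcop
    have hdvd : (a : ℤ) ∣ ((y : ℤ) - y') * b := ⟨(z : ℤ) - z', by linear_combination hint⟩
    have hdvd' : (a : ℤ) ∣ (y : ℤ) - y' := hc.dvd_of_dvd_mul_right hdvd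
    have h0 : (y : ℤ) - y' = 0 := Int.eq_zero_of_abs_lt_dvd hdvd' (abs_lt.mpr ⟨by omega, by omega⟩)
    have hyy : y = y' := by omega
    subst hyy
    have : (z : ℤ) = z' := by
      have hb0 : (0 : ℤ) < b := by positivity
      nlinarith [hint]
    have : z = z' := by omega
    simp [this]
  · -- surjectivity
    intro s hs
    have hs' := (hD s).mp hs
    haveI : NeZero a := ⟨by omega⟩
    have hbu : IsUnit (b : ZMod a) := (ZMod.isUnit_iff_coprime b a).mpr
      (Nat.coprime_comm.mp hcop)
    obtain ⟨y, hylt, hmeq⟩ : ∃ y : ℕ, y < a ∧ y * b ≡ s [MOD a] := by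
      refine ⟨((s : ZMod a) * (b : ZMod a)⁻¹).val, ZMod.val_lt _, ?_⟩
      refine (ZMod.natCast_eq_natCast_iff _ _ _).mp ?_
      push_cast
      rw [ZMod.natCast_val, ZMod.cast_id, mul_assoc, ZMod.inv_mul_of_unit _ hbu, mul_one]
    have hdvd : (a : ℤ) ∣ (s : ℤ) - (y * b : ℕ) := hmeq.dvd
    obtain ⟨k, hk⟩ := hdvd
    have hs0 : s ≠ 0 := by
      rintro rfl
      exact hs' ⟨0, 0, by simp⟩
    -- if k ≥ 0 then s is representable
    have hkneg : k < 0 := by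
      by_contra hcon
      push_neg at hcon
      refine hs' ⟨k.toNat, y, ?_⟩
      have : (s : ℤ) = (k.toNat : ℤ) * a + y * b := by
        push_cast at hk
        rw [Int.toNat_of_nonneg hcon]; linarith [hk]
      exact_mod_cast this
    obtain ⟨z, hzk⟩ : ∃ z : ℕ, (z : ℤ) = -k := ⟨(-k).toNat, Int.toNat_of_nonneg (by omega)⟩
    have hza : (z * a : ℕ) + s = y * b := by
      have : ((z * a + s : ℕ) : ℤ) = ((y * b : ℕ) : ℤ) := by
        push_cast at hk ⊢
        linear_combination hk + (a : ℤ) * hzk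
      exact_mod_cast this
    have hz1 : z ≠ 0 := by
      rintro hz0
      rw [hz0] at hza
      exact hs' ⟨0, y, by omega⟩
    have hy1 : 1 ≤ y := by
      rcases Nat.eq_zero_or_pos y with h | h
      · exfalso; rw [h] at hza; simp at hza
        have : 0 < z * a := Nat.mul_pos (by omega) (by omega)
        omega
      · exact h
    have hzb : z < b := by
      have h1 : y * b ≤ (a - 1) * b := Nat.mul_le_mul_right b (by omega)
      have h2 : (a - 1) * b < a * b := by
        have : a - 1 < a := by omega
        exact Nat.mul_lt_mul_of_lt_of_le this (le_refl b) (by omega)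
      have h3 : z * a < a * b := by omega
      rw [Nat.mul_comm a b] at h3
      exact Nat.lt_of_mul_lt_mul_right h3
    refine ⟨⟨y, z⟩, ?_, ?_⟩
    · simp only [Finset.mem_filter, Finset.mem_product, Finset.mem_Ico]
      refine ⟨⟨⟨hy1, hylt⟩, by omega, hzb⟩, by omega⟩
    · show y * b - z * a = s
      omega
  · rintro ⟨y, z⟩ hp
    rfl

theorem power_sum_two_two_generators (d1 d2 : ℕ) (h1 : 1 < d1) (h12 : d1 < d2)
    (hcop : Nat.gcd d1 d2 = 1)
    (hfin : {s : ℕ | ¬ ∃ x1 x2 : ℕ, s = x1 * d1 + x2 * d2}.Finite) :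
    (12 : ℤ) * ∑ s ∈ hfin.toFinset, (s : ℤ) ^ 2 =
      ((d1 : ℤ) - 1) * ((d2 : ℤ) - 1) * (d1 : ℤ) * (d2 : ℤ) *
        ((d1 : ℤ) * (d2 : ℤ) - (d1 : ℤ) - (d2 : ℤ)) := by
  have h2 : 1 < d2 := by omega
  set D := hfin.toFinset with hDdef
  have hD : ∀ s, s ∈ D ↔ ¬∃ x1 x2 : ℕ, s = x1 * d1 + x2 * d2 := by
    intro s; rw [hDdef, Set.Finite.mem_toFinset]; rfl
  have hD' : ∀ s, s ∈ D ↔ ¬∃ x1 x2 : ℕ, s = x1 * d2 + x2 * d1 := by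
    intro s
    rw [hD]
    constructor
    · rintro h ⟨x1, x2, hx⟩; exact h ⟨x2, x1, by omega⟩
    · rintro h ⟨x1, x2, hx⟩; exact h ⟨x2, x1, by omega⟩
  have key1 := gap_sum_aux d1 d2 h1 h2 hcop D hD
  have key2 := gap_sum_aux d2 d1 h2 h1 ((Nat.gcd_comm d2 d1).trans hcop) D hD'
  set G := (Finset.Ico 1 d1) ×ˢ (Finset.Ico 1 d2) with hG
  -- the nonzero-difference fact
  have hne : ∀ p ∈ G, p.1 * d2 ≠ p.2 * d1 := by
    rintro ⟨y, z⟩ hp heq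
    dsimp only at heq
    simp only [hG, Finset.mem_product, Finset.mem_Ico] at hp
    have hdvd : d1 ∣ y * d2 := ⟨z, by rw [heq, Nat.mul_comm]⟩
    have hdvd' : d1 ∣ y := Nat.Coprime.dvd_of_dvd_mul_right hcop hdvd
    have := Nat.le_of_dvd (by omega) hdvd'
    omega
  have hsplit : ∑ p ∈ G, ((p.1 : ℤ) * d2 - (p.2 : ℤ) * d1) ^ 2 =
      ∑ p ∈ G.filter (fun p => p.2 * d1 < p.1 * d2), ((p.1 : ℤ) * d2 - (p.2 : ℤ) * d1) ^ 2 +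
      ∑ p ∈ G.filter (fun p => ¬ p.2 * d1 < p.1 * d2), ((p.1 : ℤ) * d2 - (p.2 : ℤ) * d1) ^ 2 :=
    (Finset.sum_filter_add_sum_filter_not G _ _).symm
  have hT1 : ∑ p ∈ G.filter (fun p => p.2 * d1 < p.1 * d2), ((p.1 : ℤ) * d2 - (p.2 : ℤ) * d1) ^ 2
      = ∑ s ∈ D, (s : ℤ) ^ 2 := by
    rw [← key1]
    refine Finset.sum_congr rfl ?_
    rintro ⟨y, z⟩ hp
    simp only [Finset.mem_filter, Finset.mem_product, Finset.mem_Ico] at hp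
    have : ((y * d2 - z * d1 : ℕ) : ℤ) = (y : ℤ) * d2 - (z : ℤ) * d1 := by
      have := hp.2
      push_cast [Nat.cast_sub (le_of_lt this)]
      ring
    rw [this]
  have hfc : G.filter (fun p => ¬ p.2 * d1 < p.1 * d2) = G.filter (fun p => p.1 * d2 < p.2 * d1) := by
    apply Finset.filter_congr
    intro p hp
    have := hne p hp
    simp only [not_lt]
    constructor
    · intro h; omega
    · intro h; omega
  have hT2 : ∑ p ∈ G.filter (fun p => ¬ p.2 * d1 < p.1 * d2), ((p.1 : ℤ) * d2 - (p.2 : ℤ) * d1) ^ 2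
      = ∑ s ∈ D, (s : ℤ) ^ 2 := by
    rw [hfc, ← key2]
    refine Finset.sum_bij (fun p _ => Prod.swap p) ?_ ?_ ?_ ?_
    · rintro ⟨y, z⟩ hp
      simp only [hG, Finset.mem_filter, Finset.mem_product, Finset.mem_Ico] at hp ⊢
      obtain ⟨⟨⟨hy1, hy2⟩, hz1, hz2⟩, hlt⟩ := hp
      exact ⟨⟨⟨hz1, hz2⟩, hy1, hy2⟩, hlt⟩
    · rintro ⟨y, z⟩ _ ⟨y', z'⟩ _ h
      simpa [Prod.ext_iff, And.comm] using h
    · rintro ⟨z, y⟩ hp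
      simp only [hG, Finset.mem_filter, Finset.mem_product, Finset.mem_Ico] at hp
      obtain ⟨⟨⟨hz1, hz2⟩, hy1, hy2⟩, hlt⟩ := hp
      refine ⟨⟨y, z⟩, ?_, rfl⟩
      simp only [hG, Finset.mem_filter, Finset.mem_product, Finset.mem_Ico]
      exact ⟨⟨⟨hy1, hy2⟩, hz1, hz2⟩, hlt⟩
    · rintro ⟨y, z⟩ hp
      simp only [hG, Finset.mem_filter, Finset.mem_product, Finset.mem_Ico] at hp
      have hlt := hp.2
      have : ((z * d1 - y * d2 : ℕ) : ℤ) = (z : ℤ) * d1 - (y : ℤ) * d2 := by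
        push_cast [Nat.cast_sub (le_of_lt hlt)]
        ring
      show ((y : ℤ) * d2 - (z : ℤ) * d1) ^ 2 = ((z * d1 - y * d2 : ℕ) : ℤ) ^ 2
      rw [this]
      ring
  -- polynomial evaluation of the grid sum
  set A1 := ∑ y ∈ Finset.Ico 1 d1, (y : ℤ) with hA1def
  set A2 := ∑ y ∈ Finset.Ico 1 d1, (y : ℤ) ^ 2 with hA2def
  set B1 := ∑ z ∈ Finset.Ico 1 d2, (z : ℤ) with hB1def
  set B2 := ∑ z ∈ Finset.Ico 1 d2, (z : ℤ) ^ 2 with hB2def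
  have hA1 : 2 * A1 = d1 * (d1 - 1) := sum_Ico_id' d1
  have hA2 : 6 * A2 = d1 * (d1 - 1) * (2 * d1 - 1) := sum_Ico_sq' d1
  have hB1 : 2 * B1 = d2 * (d2 - 1) := sum_Ico_id' d2
  have hB2 : 6 * B2 = d2 * (d2 - 1) * (2 * d2 - 1) := sum_Ico_sq' d2
  have hcard1 : ((Finset.Ico 1 d1).card : ℤ) = (d1 : ℤ) - 1 := by
    rw [Nat.card_Ico]; push_cast [Nat.cast_sub (by omega : 1 ≤ d1)]; ring
  have hcard2 : ((Finset.Ico 1 d2).card : ℤ) = (d2 : ℤ) - 1 := by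
    rw [Nat.card_Ico]; push_cast [Nat.cast_sub (by omega : 1 ≤ d2)]; ring
  have hexp : ∑ p ∈ G, ((p.1 : ℤ) * d2 - (p.2 : ℤ) * d1) ^ 2 =
      ((d2 : ℤ) - 1) * (d2 : ℤ) ^ 2 * A2 - 2 * (d1 : ℤ) * d2 * A1 * B1 +
        ((d1 : ℤ) - 1) * (d1 : ℤ) ^ 2 * B2 := by
    rw [hG, Finset.sum_product]
    have hinner : ∀ y : ℕ, ∑ z ∈ Finset.Ico 1 d2, ((y : ℤ) * d2 - (z : ℤ) * d1) ^ 2 =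
        ((d2 : ℤ) - 1) * ((y : ℤ) * d2) ^ 2 - 2 * (y : ℤ) * d2 * d1 * B1 + (d1 : ℤ) ^ 2 * B2 := by
      intro y
      have : ∀ z ∈ Finset.Ico 1 d2, ((y : ℤ) * d2 - (z : ℤ) * d1) ^ 2 =
          ((y : ℤ) * d2) ^ 2 + ((d1 : ℤ) ^ 2 * (z : ℤ) ^ 2 - 2 * (y : ℤ) * d2 * d1 * (z : ℤ)) := by
        intro z _; ring
      rw [Finset.sum_congr rfl this, Finset.sum_add_distrib, Finset.sum_sub_distrib,
        Finset.sum_const, ← Finset.mul_sum, ← Finset.mul_sum, nsmul_eq_mul, hcard2,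
        ← hB1def, ← hB2def]
      ring
    rw [show (∑ y ∈ Finset.Ico 1 d1, ∑ z ∈ Finset.Ico 1 d2, ((y : ℤ) * d2 - (z : ℤ) * d1) ^ 2)
        = ∑ y ∈ Finset.Ico 1 d1, (((d2 : ℤ) - 1) * ((y : ℤ) * d2) ^ 2 -
            2 * (y : ℤ) * d2 * d1 * B1 + (d1 : ℤ) ^ 2 * B2)
      from Finset.sum_congr rfl (fun y _ => hinner y), Finset.sum_add_distrib,
      Finset.sum_sub_distrib, Finset.sum_const, nsmul_eq_mul, hcard1]
    have h1 : ∑ y ∈ Finset.Ico 1 d1, ((d2 : ℤ) - 1) * ((y : ℤ) * d2) ^ 2 =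
        ((d2 : ℤ) - 1) * d2 ^ 2 * A2 := by
      have e : ∑ y ∈ Finset.Ico 1 d1, ((d2 : ℤ) - 1) * ((y : ℤ) * d2) ^ 2 =
          (∑ y ∈ Finset.Ico 1 d1, (y : ℤ) ^ 2) * (((d2 : ℤ) - 1) * d2 ^ 2) := by
        rw [Finset.sum_mul]
        exact Finset.sum_congr rfl (fun y _ => by ring)
      rw [e, ← hA2def]; ring
    have h2 : ∑ y ∈ Finset.Ico 1 d1, 2 * (y : ℤ) * d2 * d1 * B1 =
        2 * (d1 : ℤ) * d2 * A1 * B1 := by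
      have e : ∑ y ∈ Finset.Ico 1 d1, 2 * (y : ℤ) * d2 * d1 * B1 =
          (∑ y ∈ Finset.Ico 1 d1, (y : ℤ)) * (2 * (d2 : ℤ) * d1 * B1) := by
        rw [Finset.sum_mul]
        exact Finset.sum_congr rfl (fun y _ => by ring)
      rw [e, ← hA1def]; ring
    rw [h1, h2]
    ring
  have hGS : ∑ p ∈ G, ((p.1 : ℤ) * d2 - (p.2 : ℤ) * d1) ^ 2 = 2 * ∑ s ∈ D, (s : ℤ) ^ 2 := by
    rw [hsplit, hT1, hT2]; ring
  have h6 : 6 * (2 * ∑ s ∈ D, (s : ℤ) ^ 2) =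
      ((d1 : ℤ) - 1) * ((d2 : ℤ) - 1) * (d1 : ℤ) * (d2 : ℤ) *
        ((d1 : ℤ) * (d2 : ℤ) - (d1 : ℤ) - (d2 : ℤ)) := by
    rw [← hGS, hexp]
    have hA1B1 : 4 * (A1 * B1) = ((d1 : ℤ) * (d1 - 1)) * ((d2 : ℤ) * (d2 - 1)) := by
      calc 4 * (A1 * B1) = (2 * A1) * (2 * B1) := by ring
        _ = _ := by rw [hA1, hB1]
    linear_combination ((d2 : ℤ) - 1) * (d2 : ℤ) ^ 2 * hA2 - 3 * (d1 : ℤ) * d2 * hA1B1 +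
      ((d1 : ℤ) - 1) * (d1 : ℤ) ^ 2 * hB2
  linear_combination h6
end

section
/- Let d1, d2 be coprime with 1 < d1 < d2 and Δ(d1,d2) the set of nonrepresentable integers. For every n ≥ 0, Σ_{s ∈ Δ} sⁿ = (1/((n+1)(n+2))) · Σ_{k=0}^{n+1} Σ_{l=0}^{n+1−k} C(n+2,k)·C(n+2−k,l)·B_k·B_l·d1^{n+1−k}·d2^{n+1−l} − B_{n+1}/(n+1), where B_k are the Bernoulli numbers. -/
open PowerSeries Finset Nat

private def IsRep (d1 d2 s : ℕ) : Prop := ∃ x1 x2 : ℕ, s = x1 * d1 + x2 * d2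

private lemma repL3 {d1 d2 m : ℕ} (h : d2 ≤ m) (hr : IsRep d1 d2 (m - d2)) : IsRep d1 d2 m := by
  obtain ⟨x1, x2, hx⟩ := hr
  exact ⟨x1, x2 + 1, by rw [add_mul, one_mul, ← add_assoc, ← hx, Nat.sub_add_cancel h]⟩

private lemma repL1 {d1 d2 m : ℕ} (h1 : 1 ≤ d1) (hd2 : 1 ≤ d2) (hm : IsRep d1 d2 m)
    (hno : ¬ ∃ x1 < d2, m = x1 * d1) : d2 ≤ m ∧ IsRep d1 d2 (m - d2) := by
  obtain ⟨x1, x2, hx⟩ := hm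
  rcases Nat.eq_zero_or_pos x2 with h0 | hpos
  · subst h0
    have hx1 : d2 ≤ x1 := by
      by_contra hc
      exact hno ⟨x1, by omega, by omega⟩
    have ha : (x1 - d2) * d1 = x1 * d1 - d2 * d1 := Nat.sub_mul _ _ _
    have hb : (d1 - 1) * d2 = d1 * d2 - 1 * d2 := Nat.sub_mul _ _ _
    have hc : d2 * d1 = d1 * d2 := mul_comm _ _
    have hd : d2 * d1 ≤ x1 * d1 := Nat.mul_le_mul_right _ hx1
    have he : d2 ≤ d1 * d2 := Nat.le_mul_of_pos_left _ h1
    exact ⟨by omega, ⟨x1 - d2, d1 - 1, by omega⟩⟩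
  · have ha : (x2 - 1) * d2 = x2 * d2 - 1 * d2 := Nat.sub_mul _ _ _
    have hb : d2 ≤ x2 * d2 := Nat.le_mul_of_pos_left _ hpos
    exact ⟨by omega, ⟨x1, x2 - 1, by omega⟩⟩

private lemma repL2 {d1 d2 m : ℕ} (hd1 : 0 < d1) (hcop : Nat.gcd d1 d2 = 1)
    (hex : ∃ x1 < d2, m = x1 * d1) :
    IsRep d1 d2 m ∧ ¬ (d2 ≤ m ∧ IsRep d1 d2 (m - d2)) := by
  obtain ⟨x1, hx1, rfl⟩ := hex
  refine ⟨⟨x1, 0, by simp⟩, ?_⟩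
  rintro ⟨hle, y1, y2, hy⟩
  have key : x1 * d1 = y1 * d1 + (y2 + 1) * d2 := by
    have h2 : (y2 + 1) * d2 = y2 * d2 + 1 * d2 := by ring
    omega
  have hy1le : y1 * d1 ≤ x1 * d1 := by omega
  have hy1x : y1 ≤ x1 := Nat.le_of_mul_le_mul_right hy1le hd1
  have hdvd : d1 ∣ (y2 + 1) * d2 := by
    refine ⟨x1 - y1, ?_⟩
    have hsub : (x1 - y1) * d1 = x1 * d1 - y1 * d1 := Nat.sub_mul _ _ _
    have hcomm : (x1 - y1) * d1 = d1 * (x1 - y1) := mul_comm _ _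
    omega
  have hcop' : Nat.Coprime d1 d2 := hcop
  have hdvd2 : d1 ∣ y2 + 1 := hcop'.dvd_of_dvd_mul_right hdvd
  have h3 : d1 ≤ y2 + 1 := Nat.le_of_dvd (Nat.succ_pos _) hdvd2
  have h4 : d1 * d2 ≤ (y2 + 1) * d2 := Nat.mul_le_mul_right _ h3
  have h5 : x1 * d1 < d2 * d1 := (Nat.mul_lt_mul_right hd1).mpr hx1
  have h6 : d2 * d1 = d1 * d2 := mul_comm _ _
  omega

open scoped Classical in
private lemma coeffQ {d1 d2 : ℕ} (hd1 : 0 < d1) (m : ℕ) :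
    (PowerSeries.coeff (R := ℚ) m) (∑ x ∈ range d2, (X : PowerSeries ℚ) ^ (x * d1)) =
      if ∃ x1 < d2, m = x1 * d1 then 1 else 0 := by
  rw [map_sum]
  by_cases h : ∃ x1 < d2, m = x1 * d1
  · obtain ⟨x1, hx1, rfl⟩ := h
    rw [if_pos ⟨x1, hx1, rfl⟩]
    rw [Finset.sum_eq_single_of_mem x1 (mem_range.mpr hx1)]
    · simp [PowerSeries.coeff_X_pow]
    · intro b _ hb
      rw [PowerSeries.coeff_X_pow, if_neg]
      intro hc
      exact hb (Nat.eq_of_mul_eq_mul_right hd1 hc.symm)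
  · rw [if_neg h]
    refine Finset.sum_eq_zero fun x hx => ?_
    rw [PowerSeries.coeff_X_pow, if_neg]
    intro hc
    exact h ⟨x, mem_range.mp hx, hc⟩

open scoped Classical in
private lemma RQser {d1 d2 : ℕ} (hd1 : 1 ≤ d1) (hd2 : 1 ≤ d2) (hcop : Nat.gcd d1 d2 = 1) :
    (PowerSeries.mk fun m => if IsRep d1 d2 m then (1 : ℚ) else 0) * (1 - X ^ d2) =
      ∑ x ∈ range d2, (X : PowerSeries ℚ) ^ (x * d1) := by
  ext m
  rw [mul_sub, mul_one, map_sub, PowerSeries.coeff_mul_X_pow', PowerSeries.coeff_mk, coeffQ hd1]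
  by_cases hex : ∃ x1 < d2, m = x1 * d1
  · obtain ⟨hrep, hnot⟩ := repL2 hd1 hcop hex
    rw [if_pos hex, if_pos hrep]
    by_cases hle : d2 ≤ m
    · rw [if_pos hle, PowerSeries.coeff_mk, if_neg (fun hr => hnot ⟨hle, hr⟩)]
      ring
    · rw [if_neg hle]; ring
  · rw [if_neg hex]
    by_cases hrep : IsRep d1 d2 m
    · obtain ⟨hle, hrep'⟩ := repL1 hd1 hd2 hrep hex
      rw [if_pos hrep, if_pos hle, PowerSeries.coeff_mk, if_pos hrep']
      ring
    · rw [if_neg hrep]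
      by_cases hle : d2 ≤ m
      · rw [if_pos hle, PowerSeries.coeff_mk, if_neg (fun hr => hrep (repL3 hle hr))]
        ring
      · rw [if_neg hle]; ring

private lemma QXser (d1 d2 : ℕ) :
    (∑ x ∈ range d2, (X : PowerSeries ℚ) ^ (x * d1)) * (1 - X ^ d1) =
      1 - X ^ (d1 * d2) := by
  rw [Finset.sum_mul]
  have : ∀ x : ℕ, (X : PowerSeries ℚ) ^ (x * d1) * (1 - X ^ d1) =
      (fun i => (X : PowerSeries ℚ) ^ (i * d1)) x - (fun i => (X : PowerSeries ℚ) ^ (i * d1)) (x + 1) := by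
    intro x
    simp only [mul_sub, mul_one, ← pow_add, add_mul, one_mul]
  rw [Finset.sum_congr rfl fun x _ => this x, Finset.sum_range_sub']
  simp [mul_comm d1 d2]

private lemma Sser_mul : (PowerSeries.mk fun _ => (1 : ℚ)) * (1 - X) = 1 := by
  ext m
  rw [mul_sub, mul_one, map_sub, ← pow_one (X : PowerSeries ℚ), PowerSeries.coeff_mul_X_pow',
    PowerSeries.coeff_mk]
  cases m with
  | zero => simp
  | succ k => simp [PowerSeries.coeff_one, PowerSeries.coeff_mk]

open scoped Classical in
private lemma Gser_add {d1 d2 : ℕ} (F : Finset ℕ) (hF : ∀ s, s ∈ F ↔ ¬ IsRep d1 d2 s) :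
    (∑ s ∈ F, (X : PowerSeries ℚ) ^ s) +
        (PowerSeries.mk fun m => if IsRep d1 d2 m then (1 : ℚ) else 0) =
      PowerSeries.mk fun _ => (1 : ℚ) := by
  ext m
  rw [map_add, map_sum, PowerSeries.coeff_mk, PowerSeries.coeff_mk]
  have : ∑ s ∈ F, (PowerSeries.coeff (R := ℚ) m) (X ^ s) = if m ∈ F then (1:ℚ) else 0 := by
    simp only [PowerSeries.coeff_X_pow]
    exact Finset.sum_ite_eq F m fun _ => (1:ℚ)
  rw [this]
  by_cases hrep : IsRep d1 d2 m
  · rw [if_pos hrep, if_neg (fun hm => (hF m).mp hm hrep)]; ring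
  · rw [if_neg hrep, if_pos ((hF m).mpr hrep)]; ring

private lemma star {d1 d2 : ℕ} (hd1 : 1 ≤ d1) (hd2 : 1 ≤ d2) (hcop : Nat.gcd d1 d2 = 1)
    (F : Finset ℕ) (hF : ∀ s, s ∈ F ↔ ¬ IsRep d1 d2 s) :
    (∑ s ∈ F, (X : PowerSeries ℚ) ^ s) *
        ((1 - X ^ d1) * (1 - X ^ d2) * (1 - X)) =
      (1 - X ^ d1) * (1 - X ^ d2) - (1 - X ^ (d1 * d2)) * (1 - X) := by
  classical
  have hG : (∑ s ∈ F, (X : PowerSeries ℚ) ^ s) =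
      (PowerSeries.mk fun _ => (1 : ℚ)) -
        (PowerSeries.mk fun m => if IsRep d1 d2 m then (1 : ℚ) else 0) :=
    eq_sub_of_add_eq (Gser_add F hF)
  rw [hG]
  linear_combination ((1 - (X:PowerSeries ℚ) ^ d1) * (1 - X ^ d2)) * Sser_mul -
    ((1 - (X:PowerSeries ℚ) ^ d1) * (1 - X)) * RQser hd1 hd2 hcop -
    (1 - (X:PowerSeries ℚ)) * QXser d1 d2

private lemma pstar {d1 d2 : ℕ} (hd1 : 1 ≤ d1) (hd2 : 1 ≤ d2) (hcop : Nat.gcd d1 d2 = 1)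
    (F : Finset ℕ) (hF : ∀ s, s ∈ F ↔ ¬ IsRep d1 d2 s) :
    (∑ s ∈ F, (Polynomial.X : Polynomial ℚ) ^ s) *
        ((1 - Polynomial.X ^ d1) * (1 - Polynomial.X ^ d2) * (1 - Polynomial.X)) =
      (1 - Polynomial.X ^ d1) * (1 - Polynomial.X ^ d2) -
        (1 - Polynomial.X ^ (d1 * d2)) * (1 - Polynomial.X) := by
  have hρinj : Function.Injective (Polynomial.coeToPowerSeries.ringHom (R := ℚ)) := by
    intro a b h
    exact Polynomial.coe_inj.mp (by simpa [Polynomial.coeToPowerSeries.ringHom_apply] using h)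
  apply hρinj
  have hX : Polynomial.coeToPowerSeries.ringHom (Polynomial.X : Polynomial ℚ) = X := by
    simp [Polynomial.coeToPowerSeries.ringHom_apply]
  simp only [map_mul, map_sub, map_one, map_pow, map_sum, hX]
  exact star hd1 hd2 hcop F hF

private lemma estar {d1 d2 : ℕ} (hd1 : 1 ≤ d1) (hd2 : 1 ≤ d2) (hcop : Nat.gcd d1 d2 = 1)
    (F : Finset ℕ) (hF : ∀ s, s ∈ F ↔ ¬ IsRep d1 d2 s) :
    (∑ s ∈ F, (exp ℚ) ^ s) *
        ((1 - exp ℚ ^ d1) * (1 - exp ℚ ^ d2) * (1 - exp ℚ)) =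
      (1 - exp ℚ ^ d1) * (1 - exp ℚ ^ d2) - (1 - exp ℚ ^ (d1 * d2)) * (1 - exp ℚ) := by
  have h := congrArg (Polynomial.aeval (R := ℚ) (exp ℚ)) (pstar hd1 hd2 hcop F hF)
  simpa only [map_mul, map_sub, map_one, map_pow, map_sum, Polynomial.aeval_X] using h

private lemma eA (a : ℕ) :
    (exp ℚ ^ a - 1) * rescale (a : ℚ) (bernoulliPowerSeries ℚ) = C (R := ℚ) (a : ℚ) * X := by
  rw [exp_pow_eq_rescale_exp]
  have h1 : rescale (a : ℚ) (exp ℚ) - 1 = rescale (a : ℚ) (exp ℚ - 1) := by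
    rw [map_sub, map_one]
  rw [h1, ← map_mul]
  have h2 : (exp ℚ - 1) * bernoulliPowerSeries ℚ = X := by
    rw [mul_comm]; exact bernoulliPowerSeries_mul_exp_sub_one ℚ
  rw [h2, rescale_X]

private lemma crux {d1 d2 : ℕ} (hd1 : 1 ≤ d1) (hd2 : 1 ≤ d2) (hcop : Nat.gcd d1 d2 = 1)
    (F : Finset ℕ) (hF : ∀ s, s ∈ F ↔ ¬ IsRep d1 d2 s) :
    C (R := ℚ) (d1 : ℚ) * C (R := ℚ) (d2 : ℚ) * X ^ 2 * (∑ s ∈ F, (exp ℚ) ^ s) =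
      (exp ℚ ^ (d1 * d2) - 1) * rescale (d1 : ℚ) (bernoulliPowerSeries ℚ) *
          rescale (d2 : ℚ) (bernoulliPowerSeries ℚ) -
        C (R := ℚ) (d1 : ℚ) * C (R := ℚ) (d2 : ℚ) * X * bernoulliPowerSeries ℚ := by
  set B := bernoulliPowerSeries ℚ with hB
  set H := ∑ s ∈ F, (exp ℚ) ^ s with hH
  have e1 : (exp ℚ ^ 1 - 1) * B = X := by
    rw [pow_one, mul_comm]; exact bernoulliPowerSeries_mul_exp_sub_one ℚ
  have h10 : H * ((exp ℚ ^ 1 - 1) * B) * ((exp ℚ ^ d1 - 1) * rescale (d1 : ℚ) B) *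
      ((exp ℚ ^ d2 - 1) * rescale (d2 : ℚ) B) =
      ((exp ℚ ^ 1 - 1) * B) * (exp ℚ ^ (d1 * d2) - 1) * rescale (d1 : ℚ) B *
          rescale (d2 : ℚ) B -
        ((exp ℚ ^ d1 - 1) * rescale (d1 : ℚ) B) * ((exp ℚ ^ d2 - 1) * rescale (d2 : ℚ) B) * B := by
    linear_combination (-(B * rescale (d1:ℚ) B * rescale (d2:ℚ) B)) * estar hd1 hd2 hcop F hF
  rw [eA d1, eA d2, e1] at h10
  have h11 : (X : PowerSeries ℚ) *
      (C (R := ℚ) (d1 : ℚ) * C (R := ℚ) (d2 : ℚ) * X ^ 2 * H) =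
      X * ((exp ℚ ^ (d1 * d2) - 1) * rescale (d1 : ℚ) B * rescale (d2 : ℚ) B -
        C (R := ℚ) (d1 : ℚ) * C (R := ℚ) (d2 : ℚ) * X * B) := by
    linear_combination h10
  exact mul_left_cancel₀ X_ne_zero h11

private lemma tri_sum (N : ℕ) (f : ℕ → ℕ → ℚ) :
    ∑ k ∈ range N, ∑ l ∈ range (N - k), f k l =
      ∑ j ∈ range N, ∑ k ∈ range (j + 1), f k (j - k) := by
  induction N with
  | zero => simp
  | succ N ih =>
    rw [Finset.sum_range_succ (f := fun j => ∑ k ∈ range (j + 1), f k (j - k)), ← ih,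
      Finset.sum_range_succ (f := fun k => ∑ l ∈ range (N + 1 - k), f k l)]
    have h1 : ∀ k ∈ range N, ∑ l ∈ range (N + 1 - k), f k l =
        ∑ l ∈ range (N - k), f k l + f k (N - k) := by
      intro k hk
      have : N + 1 - k = (N - k) + 1 := by
        have := mem_range.mp hk; omega
      rw [this, Finset.sum_range_succ]
    rw [Finset.sum_congr rfl h1, Finset.sum_add_distrib,
      Finset.sum_range_succ (f := fun k => f k (N - k))]
    simp only [Nat.add_sub_cancel_left, Nat.sub_self]
    rw [Finset.sum_range_one]
    ring

private lemma choose_fact {n a b : ℕ} (ha : a ≤ n) (hb : b ≤ n - a) :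
    (n.choose a) * ((n - a).choose b) * (a ! * b ! * (n - a - b)!) = n ! := by
  have h1 := Nat.choose_mul_factorial_mul_factorial ha
  have h2 := Nat.choose_mul_factorial_mul_factorial hb
  calc (n.choose a) * ((n - a).choose b) * (a ! * b ! * (n - a - b)!)
      = (n.choose a) * a ! * ((n - a).choose b * b ! * (n - a - b)!) := by ring
    _ = (n.choose a) * a ! * (n - a)! := by rw [h2]
    _ = n ! := by rw [← h1]

private noncomputable def FF (n : ℕ) (D1 D2 : ℚ) (a b : ℕ) : ℚ :=
  bernoulli a * bernoulli b * D1 ^ (n + 2 - b) * D2 ^ (n + 2 - a) /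
    ((a ! : ℚ) * (b ! : ℚ) * ((n + 2 - a - b)! : ℚ))

private lemma inner_reflect (n : ℕ) (D1 D2 : ℚ) (j : ℕ) :
    ∑ k ∈ range (j + 1), FF n D1 D2 (j - k) k = ∑ k ∈ range (j + 1), FF n D1 D2 k (j - k) := by
  have h := Finset.sum_range_reflect (fun k => FF n D1 D2 k (j - k)) (j + 1)
  rw [← h]
  refine Finset.sum_congr rfl fun i hi => ?_
  have hi' : i ≤ j := by have := mem_range.mp hi; omega
  have e1 : j + 1 - 1 - i = j - i := by omega
  have e2 : j - (j - i) = i := by omega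
  rw [e1, e2]

private lemma rhs_eq (n d1 d2 : ℕ) :
    ((d1 : ℚ) * d2) / (((n + 2)! : ℕ) : ℚ) *
        ∑ k ∈ range (n + 2), ∑ l ∈ range (n + 2 - k),
          ((n + 2).choose k : ℚ) * ((n + 2 - k).choose l : ℚ) *
            bernoulli k * bernoulli l * (d1 : ℚ) ^ (n + 1 - k) * (d2 : ℚ) ^ (n + 1 - l) =
      ∑ j ∈ range (n + 2), ∑ k ∈ range (j + 1), FF n d1 d2 k (j - k) := by
  have step1 : ∀ k ∈ range (n + 2), ∀ l ∈ range (n + 2 - k),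
      ((d1 : ℚ) * d2) / (((n + 2)! : ℕ) : ℚ) *
          (((n + 2).choose k : ℚ) * ((n + 2 - k).choose l : ℚ) *
            bernoulli k * bernoulli l * (d1 : ℚ) ^ (n + 1 - k) * (d2 : ℚ) ^ (n + 1 - l)) =
        FF n d1 d2 l k := by
    intro k hk l hl
    have hk' : k ≤ n + 1 := by have := mem_range.mp hk; omega
    have hl' : l ≤ n + 1 - k := by have := mem_range.mp hl; omega
    have hch := choose_fact (n := n + 2) (a := k) (b := l) (by omega) (by omega)
    have hchq : ((n + 2).choose k : ℚ) * (((n + 2) - k).choose l : ℚ) *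
        ((k ! : ℚ) * (l ! : ℚ) * (((n + 2) - k - l)! : ℚ)) = (((n + 2)! : ℕ) : ℚ) := by
      exact_mod_cast congrArg (Nat.cast (R := ℚ)) hch
    rw [FF]
    have e3 : n + 2 - l - k = n + 2 - k - l := by omega
    have p1 : (d1 : ℚ) ^ (n + 2 - k) = (d1 : ℚ) ^ (n + 1 - k) * d1 := by
      rw [show n + 2 - k = (n + 1 - k) + 1 by omega, pow_succ]
    have p2 : (d2 : ℚ) ^ (n + 2 - l) = (d2 : ℚ) ^ (n + 1 - l) * d2 := by
      rw [show n + 2 - l = (n + 1 - l) + 1 by omega, pow_succ]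
    rw [e3, p1, p2]
    have hf1 : ((k ! : ℕ) : ℚ) ≠ 0 := Nat.cast_ne_zero.mpr (Nat.factorial_ne_zero _)
    have hf2 : ((l ! : ℕ) : ℚ) ≠ 0 := Nat.cast_ne_zero.mpr (Nat.factorial_ne_zero _)
    have hf3 : (((n + 2 - k - l)! : ℕ) : ℚ) ≠ 0 := Nat.cast_ne_zero.mpr (Nat.factorial_ne_zero _)
    have hfN : (((n + 2)! : ℕ) : ℚ) ≠ 0 := Nat.cast_ne_zero.mpr (Nat.factorial_ne_zero _)
    field_simp
    linear_combination (bernoulli k * bernoulli l * (d1 : ℚ) ^ (n + 1 - k) * (d1 : ℚ) *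
      (d2 : ℚ) ^ (n + 1 - l) * (d2 : ℚ)) * hchq
  calc ((d1 : ℚ) * d2) / (((n + 2)! : ℕ) : ℚ) *
        ∑ k ∈ range (n + 2), ∑ l ∈ range (n + 2 - k),
          ((n + 2).choose k : ℚ) * ((n + 2 - k).choose l : ℚ) *
            bernoulli k * bernoulli l * (d1 : ℚ) ^ (n + 1 - k) * (d2 : ℚ) ^ (n + 1 - l)
      = ∑ k ∈ range (n + 2), ∑ l ∈ range (n + 2 - k), FF n d1 d2 l k := by
        rw [Finset.mul_sum]
        refine Finset.sum_congr rfl fun k hk => ?_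
        rw [Finset.mul_sum]
        exact Finset.sum_congr rfl fun l hl => step1 k hk l hl
    _ = ∑ j ∈ range (n + 2), ∑ k ∈ range (j + 1), FF n d1 d2 (j - k) k :=
        tri_sum (n + 2) fun a b => FF n d1 d2 b a
    _ = ∑ j ∈ range (n + 2), ∑ k ∈ range (j + 1), FF n d1 d2 k (j - k) :=
        Finset.sum_congr rfl fun j _ => inner_reflect n d1 d2 j

private lemma lhs_eq (n d1 d2 : ℕ) :
    ∑ m ∈ range (n + 3),
        ((((d1 : ℚ) * d2) ^ m * (1 / (m ! : ℚ)) - if m = 0 then 1 else 0) *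
          ∑ k ∈ range (n + 2 - m + 1),
            ((d1 : ℚ) ^ k * (bernoulli k / (k ! : ℚ))) *
              ((d2 : ℚ) ^ (n + 2 - m - k) * (bernoulli (n + 2 - m - k) / ((n + 2 - m - k)! : ℚ)))) =
      ∑ j ∈ range (n + 2), ∑ k ∈ range (j + 1), FF n d1 d2 k (j - k) := by
  rw [Finset.sum_range_succ']
  have h0 : ((((d1 : ℚ) * d2) ^ 0 * (1 / ((0)! : ℚ)) - if (0:ℕ) = 0 then 1 else 0) *
      ∑ k ∈ range (n + 2 - 0 + 1),
        ((d1 : ℚ) ^ k * (bernoulli k / (k ! : ℚ))) *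
          ((d2 : ℚ) ^ (n + 2 - 0 - k) * (bernoulli (n + 2 - 0 - k) / ((n + 2 - 0 - k)! : ℚ)))) = 0 := by
    norm_num
  rw [h0, add_zero]
  rw [← Finset.sum_range_reflect]
  refine Finset.sum_congr rfl fun j hj => ?_
  have hj' : j ≤ n + 1 := by have := mem_range.mp hj; omega
  have eM : n + 2 - 1 - j + 1 = n + 2 - j := by omega
  rw [eM]
  rw [if_neg (by omega : ¬ (n + 2 - j = 0))]
  have eR : n + 2 - (n + 2 - j) + 1 = j + 1 := by omega
  rw [eR, sub_zero, Finset.mul_sum]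
  refine Finset.sum_congr rfl fun k hk => ?_
  have hk' : k ≤ j := by have := mem_range.mp hk; omega
  have eI : n + 2 - (n + 2 - j) - k = j - k := by omega
  rw [eI, FF]
  have q2 : (d1 : ℚ) ^ (n + 2 - (j - k)) = (d1 : ℚ) ^ (n + 2 - j) * (d1 : ℚ) ^ k := by
    rw [← pow_add, show n + 2 - j + k = n + 2 - (j - k) by omega]
  have q3 : (d2 : ℚ) ^ (n + 2 - k) = (d2 : ℚ) ^ (n + 2 - j) * (d2 : ℚ) ^ (j - k) := by
    rw [← pow_add, show n + 2 - j + (j - k) = n + 2 - k by omega]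
  have q4 : n + 2 - k - (j - k) = n + 2 - j := by omega
  rw [q2, q3, q4, mul_pow]
  ring

theorem power_sum_general_two_generators (d1 d2 : ℕ) (h1 : 1 < d1) (h12 : d1 < d2)
    (hcop : Nat.gcd d1 d2 = 1)
    (hfin : {s : ℕ | ¬ ∃ x1 x2 : ℕ, s = x1 * d1 + x2 * d2}.Finite) (n : ℕ) :
    ∑ s ∈ hfin.toFinset, (s : ℚ) ^ n =
      (1 / (((n : ℚ) + 1) * ((n : ℚ) + 2))) *
        ∑ k ∈ Finset.range (n + 2), ∑ l ∈ Finset.range (n + 2 - k),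
          ((n + 2).choose k : ℚ) * ((n + 2 - k).choose l : ℚ) *
            bernoulli k * bernoulli l * (d1 : ℚ) ^ (n + 1 - k) * (d2 : ℚ) ^ (n + 1 - l)
      - bernoulli (n + 1) / ((n : ℚ) + 1) := by
  classical
  have hd1 : 1 ≤ d1 := le_of_lt h1
  have hd2 : 1 ≤ d2 := by omega
  obtain ⟨F, hF, hFg⟩ : ∃ F : Finset ℕ, (∀ s, s ∈ F ↔ ¬ IsRep d1 d2 s) ∧ hfin.toFinset = F :=
    ⟨hfin.toFinset, fun s => by rw [Set.Finite.mem_toFinset]; rfl, rfl⟩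
  rw [hFg]
  have hc := congrArg (PowerSeries.coeff (R := ℚ) (n + 2)) (crux hd1 hd2 hcop F hF)
  have hL1 : (C (R := ℚ) (d1:ℚ) * C (R := ℚ) (d2:ℚ) * X ^ 2 * (∑ s ∈ F, exp ℚ ^ s)) =
      C (R := ℚ) (d1:ℚ) * (C (R := ℚ) (d2:ℚ) * ((∑ s ∈ F, exp ℚ ^ s) * X ^ 2)) := by ring
  have hR1 : ((exp ℚ ^ (d1 * d2) - 1) * rescale (d1 : ℚ) (bernoulliPowerSeries ℚ) *
        rescale (d2 : ℚ) (bernoulliPowerSeries ℚ) -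
      C (R := ℚ) (d1:ℚ) * C (R := ℚ) (d2:ℚ) * X * bernoulliPowerSeries ℚ) =
      ((exp ℚ ^ (d1 * d2) - 1) * (rescale (d1 : ℚ) (bernoulliPowerSeries ℚ) *
        rescale (d2 : ℚ) (bernoulliPowerSeries ℚ)) -
      C (R := ℚ) (d1:ℚ) * (C (R := ℚ) (d2:ℚ) * (bernoulliPowerSeries ℚ * X ^ 1))) := by ring
  rw [hL1, hR1, map_sub] at hc
  simp only [PowerSeries.coeff_C_mul] at hc
  rw [PowerSeries.coeff_mul_X_pow] at hc
  rw [PowerSeries.coeff_mul_X_pow'] at hc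
  norm_num at hc
  simp only [map_sum, PowerSeries.coeff_mul, Finset.Nat.sum_antidiagonal_eq_sum_range_succ_mk,
    exp_pow_eq_rescale_exp, PowerSeries.coeff_rescale, PowerSeries.coeff_exp,
    PowerSeries.coeff_one, bernoulliPowerSeries, PowerSeries.coeff_mk,
    Algebra.algebraMap_self, RingHom.id_apply, map_sub] at hc
  push_cast at hc
  rw [lhs_eq n d1 d2, ← rhs_eq n d1 d2] at hc
  set T := ∑ k ∈ Finset.range (n + 2), ∑ l ∈ Finset.range (n + 2 - k),
          ((n + 2).choose k : ℚ) * ((n + 2 - k).choose l : ℚ) *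
            bernoulli k * bernoulli l * (d1 : ℚ) ^ (n + 1 - k) * (d2 : ℚ) ^ (n + 1 - l) with hT
  rw [← Finset.sum_mul] at hc
  have hne1 : ((n ! : ℕ) : ℚ) ≠ 0 := Nat.cast_ne_zero.mpr (Nat.factorial_ne_zero _)
  have hned1 : (d1 : ℚ) ≠ 0 := Nat.cast_ne_zero.mpr (by omega)
  have hned2 : (d2 : ℚ) ≠ 0 := Nat.cast_ne_zero.mpr (by omega)
  have hnn1 : ((n : ℚ) + 1) ≠ 0 := by positivity
  have hnn2 : ((n : ℚ) + 2) ≠ 0 := by positivity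
  have f2 : (((n + 2)! : ℕ) : ℚ) = ((n : ℚ) + 2) * (((n + 1)! : ℕ) : ℚ) := by
    rw [Nat.factorial_succ]; push_cast; ring
  have f1 : (((n + 1)! : ℕ) : ℚ) = ((n : ℚ) + 1) * ((n ! : ℕ) : ℚ) := by
    rw [Nat.factorial_succ]; push_cast; ring
  rw [f2, f1] at hc
  field_simp at hc
  set S := ∑ s ∈ F, (s : ℚ) ^ n with hS
  have hc3 : ((d1:ℚ) * d2) * (S * (((n:ℚ)+2) * ((n:ℚ)+1) * ((n:ℚ)+1)) * (((n ! : ℕ):ℚ) * ((n ! : ℕ):ℚ))) =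
      ((d1:ℚ) * d2) * ((T * ((n:ℚ)+1) - ((n:ℚ)+2) * (((n:ℚ)+1) * bernoulli (n+1))) * (((n ! : ℕ):ℚ) * ((n ! : ℕ):ℚ))) := by
    linear_combination (((d1:ℚ) * d2) * (((n ! : ℕ):ℚ) * ((n ! : ℕ):ℚ)) * ((n:ℚ)+1)) * hc
  have hc4 := mul_left_cancel₀ (mul_ne_zero hned1 hned2) hc3
  have hc5 := mul_right_cancel₀ (mul_ne_zero hne1 hne1) hc4
  field_simp
  linear_combination hc
end

section
/- Let d1, d2 be coprime with 1 < d1 < d2. As formal power series (or for |z|<1), Σ_{s ∈ Δ(d1,d2)} z^s = 1/(1−z) − (1 − z^{d1 d2})/((1 − z^{d1})(1 − z^{d2})). -/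
open PowerSeries in
open scoped Classical in
theorem gap_generating_function_two_generators (d1 d2 : ℕ) (h1 : 1 < d1) (h12 : d1 < d2)
    (hcop : Nat.gcd d1 d2 = 1) :
    (PowerSeries.mk fun s => if ¬ ∃ x1 x2 : ℕ, s = x1 * d1 + x2 * d2 then (1 : ℚ) else 0) *
        ((1 - X ^ d1) * (1 - X ^ d2)) * (1 - X) =
      (1 - X ^ d1) * (1 - X ^ d2) - (1 - X ^ (d1 * d2)) * (1 - X) := by
  have hd1 : 0 < d1 := by omega
  have hd2 : 0 < d2 := by omega
  set Rep : ℕ → Prop := fun n => ∃ x1 x2 : ℕ, n = x1 * d1 + x2 * d2 with hRepdef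
  -- closure under adding d1
  have ha : ∀ n, d1 ≤ n → Rep (n - d1) → Rep n := by
    rintro n hn ⟨x1, x2, hx⟩
    refine ⟨x1 + 1, x2, ?_⟩
    have h' : n - d1 + d1 = n := Nat.sub_add_cancel hn
    rw [← h', hx]; ring
  -- if n = i*d2 with i < d1 then not (d1 ≤ n ∧ Rep (n - d1))
  have hb2 : ∀ i : ℕ, i < d1 → ¬ (d1 ≤ i * d2 ∧ Rep (i * d2 - d1)) := by
    rintro i hi ⟨hle, y1, y2, hy⟩
    have h' : i * d2 - d1 + d1 = i * d2 := Nat.sub_add_cancel hle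
    have heq : i * d2 = y1 * d1 + y2 * d2 + d1 := by rw [← h', hy]
    have hy2i : y2 < i := by
      by_contra hcon
      push_neg at hcon
      have : i * d2 ≤ y2 * d2 := Nat.mul_le_mul_right d2 hcon
      have h0 : 0 < y1 * d1 + d1 := by positivity
      omega
    have hdvd : d1 ∣ (i - y2) * d2 := by
      have : (i - y2) * d2 = (y1 + 1) * d1 := by
        have hz : (i : ℤ) * d2 = y1 * d1 + y2 * d2 + d1 := by exact_mod_cast heq
        zify [hy2i.le]
        linear_combination hz
      rw [this]; exact dvd_mul_left d1 (y1 + 1)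
    have hcop' : Nat.Coprime d1 d2 := hcop
    have h2 : d1 ∣ i - y2 := hcop'.dvd_of_dvd_mul_right hdvd
    have h3 : d1 ≤ i - y2 := Nat.le_of_dvd (by omega) h2
    omega
  -- semigroup indicator series times (1 - X^d1)
  have hB1 : (PowerSeries.mk fun n => if Rep n then (1:ℚ) else 0) * (1 - X ^ d1)
      = ∑ i ∈ Finset.range d1, (X : PowerSeries ℚ) ^ (i * d2) := by
    ext n
    rw [mul_sub, mul_one, map_sub, PowerSeries.coeff_mul_X_pow', map_sum]
    simp only [PowerSeries.coeff_mk, PowerSeries.coeff_X_pow]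
    by_cases hex : ∃ i < d1, n = i * d2
    · obtain ⟨i0, hi0, hni⟩ := hex
      have hrep : Rep n := ⟨0, i0, by simp [hni]⟩
      have hnot : ¬ (d1 ≤ n ∧ Rep (n - d1)) := by rw [hni]; exact hb2 i0 hi0
      have hsum : ∑ i ∈ Finset.range d1, (if n = i * d2 then (1:ℚ) else 0) = 1 := by
        rw [Finset.sum_eq_single i0]
        · rw [if_pos hni]
        · intro b _ hb
          rw [if_neg]
          intro hnb
          exact hb (Nat.eq_of_mul_eq_mul_right hd2 (hni.symm.trans hnb)).symm
        · intro habs; exact absurd (Finset.mem_range.mpr hi0) habs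
      rw [hsum, if_pos hrep]
      split_ifs with hle hrep'
      · exact absurd ⟨hle, hrep'⟩ hnot
      · ring
      · ring
    · have hsum : ∑ i ∈ Finset.range d1, (if n = i * d2 then (1:ℚ) else 0) = 0 := by
        refine Finset.sum_eq_zero fun i hi => ?_
        rw [if_neg]
        push_neg at hex
        exact hex i (Finset.mem_range.mp hi)
      rw [hsum]
      by_cases hrep : Rep n
      · have hkey : d1 ≤ n ∧ Rep (n - d1) := by
          obtain ⟨x1, x2, hx⟩ := hrep
          rcases Nat.eq_zero_or_pos x1 with h0 | hpos
          · subst h0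
            simp only [Nat.zero_mul, Nat.zero_add] at hx
            have hx2 : d1 ≤ x2 := by
              by_contra hc
              push_neg at hc
              exact hex ⟨x2, hc, hx⟩
            have hle : d1 ≤ n := by
              calc d1 ≤ d1 * d2 := Nat.le_mul_of_pos_right d1 hd2
              _ ≤ x2 * d2 := Nat.mul_le_mul_right d2 hx2
              _ = n := hx.symm
            refine ⟨hle, ⟨d2 - 1, x2 - d1, ?_⟩⟩
            have hxz : (n : ℤ) = x2 * d2 := by exact_mod_cast hx
            zify [hle, hx2, hd2]
            linear_combination hxz
          · have hle : d1 ≤ n := by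
              have h5 : d1 ≤ x1 * d1 := Nat.le_mul_of_pos_left d1 hpos
              have h6 : x1 * d1 ≤ n := hx ▸ Nat.le_add_right _ _
              exact h5.trans h6
            refine ⟨hle, ⟨x1 - 1, x2, ?_⟩⟩
            have hxz : (n : ℤ) = x1 * d1 + x2 * d2 := by exact_mod_cast hx
            zify [hle, hpos]
            linear_combination hxz
        rw [if_pos hrep, if_pos hkey.1, if_pos hkey.2]
        ring
      · rw [if_neg hrep]
        have hz : (if d1 ≤ n then (if Rep (n - d1) then (1:ℚ) else 0) else 0) = 0 := by
          split_ifs with hle hrep'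
          · exact absurd (ha n hle hrep') hrep
          · rfl
          · rfl
        rw [hz]; ring
  -- geometric sum
  have hgeom : (∑ i ∈ Finset.range d1, (X : PowerSeries ℚ) ^ (i * d2)) * (1 - X ^ d2)
      = 1 - X ^ (d1 * d2) := by
    have hrw : ∀ i : ℕ, (X : PowerSeries ℚ) ^ (i * d2) = ((X : PowerSeries ℚ) ^ d2) ^ i := by
      intro i; rw [← pow_mul, mul_comm]
    simp_rw [hrw]
    have hg := geom_sum_mul ((X : PowerSeries ℚ) ^ d2) d1
    linear_combination -hg
  -- semigroup series times the full product
  have hB : (PowerSeries.mk fun n => if Rep n then (1:ℚ) else 0) * ((1 - X ^ d1) * (1 - X ^ d2))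
      = 1 - X ^ (d1 * d2) := by
    rw [← mul_assoc, hB1, hgeom]
  -- all-ones series times (1 - X)
  have hone : (PowerSeries.mk fun _ => (1:ℚ)) * (1 - X) = 1 := by
    ext n
    rw [mul_sub, mul_one, map_sub, ← pow_one (X : PowerSeries ℚ), PowerSeries.coeff_mul_X_pow']
    simp only [PowerSeries.coeff_mk, PowerSeries.coeff_one]
    cases n with
    | zero => simp
    | succ m => simp
  -- gap series = all-ones minus semigroup series
  have hA : (PowerSeries.mk fun s => if ¬ Rep s then (1:ℚ) else 0)
      = (PowerSeries.mk fun _ => (1:ℚ)) - (PowerSeries.mk fun n => if Rep n then (1:ℚ) else 0) := by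
    ext n
    simp only [map_sub, PowerSeries.coeff_mk]
    split_ifs <;> simp
  show (PowerSeries.mk fun s => if ¬ Rep s then (1:ℚ) else 0) * ((1 - X ^ d1) * (1 - X ^ d2)) * (1 - X)
      = (1 - X ^ d1) * (1 - X ^ d2) - (1 - X ^ (d1 * d2)) * (1 - X)
  rw [hA]
  linear_combination ((1 - (X : PowerSeries ℚ) ^ d1) * (1 - X ^ d2)) * hone - (1 - (X : PowerSeries ℚ)) * hB
end

section
/- Under the same hypotheses (symmetric semigroup S(d1,d2,d3) with Hilbert series numerator (1−z^{a22 d2})(1−z^{a33 d3})), the sum of the gaps satisfies 12·g₁ = (s_d − ⟨ã,d⟩)(s_d − 2⟨ã,d⟩) + (d1d2 + d1d3 + d2d3) − d1d2d3 − 1, where s_d = d1+d2+d3 and ⟨ã,d⟩ = a22 d2 + a33 d3. -/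
noncomputable def sg (d : ℕ) : Polynomial ℚ := ∑ i ∈ Finset.range d, Polynomial.X ^ i

lemma one_sub_X_mul_sg (d : ℕ) : (1 - Polynomial.X) * sg d = 1 - Polynomial.X ^ (d : ℕ) := by
  have := geom_sum_mul (Polynomial.X : Polynomial ℚ) d
  unfold sg
  linear_combination -this

lemma sg_eval (d : ℕ) : (sg d).eval 1 = d := by
  simp [sg, Polynomial.eval_finset_sum]

lemma sg_deriv_eval (d : ℕ) :
    (Polynomial.derivative (sg d)).eval 1 = d * (d - 1) / 2 := by
  induction d with
  | zero => simp [sg]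
  | succ n ih =>
    have : sg (n+1) = sg n + Polynomial.X ^ n := by simp [sg, Finset.sum_range_succ]
    rw [this, Polynomial.derivative_add, Polynomial.eval_add, ih, Polynomial.derivative_X_pow]
    push_cast
    simp
    ring

lemma cast_pred (n : ℕ) : ((n - 1 : ℕ) : ℚ) * n = ((n : ℚ) - 1) * n := by
  cases n with
  | zero => simp
  | succ m => push_cast; ring

lemma sg_deriv2_eval (d : ℕ) :
    (Polynomial.derivative (Polynomial.derivative (sg d))).eval 1 = d * (d - 1) * (d - 2) / 3 := by
  induction d with
  | zero => simp [sg]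
  | succ n ih =>
    have h : sg (n+1) = sg n + Polynomial.X ^ n := by simp [sg, Finset.sum_range_succ]
    rw [h, Polynomial.derivative_add, Polynomial.derivative_add, Polynomial.eval_add, ih,
      Polynomial.derivative_X_pow, Polynomial.derivative_C_mul, Polynomial.derivative_X_pow]
    simp only [Polynomial.eval_mul, Polynomial.eval_C, Polynomial.eval_pow, Polynomial.eval_X,
      Polynomial.eval_one, one_pow, mul_one]
    have := cast_pred n
    push_cast
    linear_combination this

lemma one_sub_X_mul_mk_one : (1 - PowerSeries.X) * PowerSeries.mk (fun _ => (1:ℚ)) = 1 := by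
  ext n
  cases n with
  | zero => simp
  | succ m => simp [sub_mul, PowerSeries.coeff_succ_X_mul]

open PowerSeries in
open scoped Classical in
theorem symmetric_semigroup_gap_sum (d1 d2 d3 a11 a22 a33 : ℕ)
    (h1 : 1 < d1) (h12 : d1 < d2) (h23 : d2 < d3)
    (hgcd : Nat.gcd d1 (Nat.gcd d2 d3) = 1)
    (ha : a11 * d1 = a22 * d2)
    (hfin : {s : ℕ | ¬ ∃ x1 x2 x3 : ℕ, s = x1 * d1 + x2 * d2 + x3 * d3}.Finite)
    (hH : (PowerSeries.mk fun s =>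
          if ∃ x1 x2 x3 : ℕ, s = x1 * d1 + x2 * d2 + x3 * d3 then (1 : ℚ) else 0) *
        ((1 - X ^ d1) * (1 - X ^ d2) * (1 - X ^ d3)) =
      (1 - X ^ (a22 * d2)) * (1 - X ^ (a33 * d3))) :
    (12 : ℤ) * ∑ s ∈ hfin.toFinset, (s : ℤ) =
      (((d1 : ℤ) + d2 + d3) - ((a22 : ℤ) * d2 + (a33 : ℤ) * d3)) *
          (((d1 : ℤ) + d2 + d3) - 2 * ((a22 : ℤ) * d2 + (a33 : ℤ) * d3)) +
        ((d1 : ℤ) * d2 + (d1 : ℤ) * d3 + (d2 : ℤ) * d3) - (d1 : ℤ) * d2 * d3 - 1 := by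
  set P : Polynomial ℚ := ∑ s ∈ hfin.toFinset, Polynomial.X ^ s with hP
  have hPcoe : (P : ℚ⟦X⟧) =
      PowerSeries.mk (fun s => if ∃ x1 x2 x3 : ℕ, s = x1 * d1 + x2 * d2 + x3 * d3 then (0:ℚ) else 1) := by
    ext n
    rw [Polynomial.coeff_coe, hP]
    simp only [Polynomial.finset_sum_coeff, Polynomial.coeff_X_pow, PowerSeries.coeff_mk]
    rw [Finset.sum_ite_eq hfin.toFinset n (fun _ => (1:ℚ))]
    simp only [Set.Finite.mem_toFinset, Set.mem_setOf_eq]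
    split_ifs with h1 h2 <;> first | rfl | tauto
  have hmk : (PowerSeries.mk fun s =>
      if ∃ x1 x2 x3 : ℕ, s = x1 * d1 + x2 * d2 + x3 * d3 then (1 : ℚ) else 0) =
      PowerSeries.mk (fun _ => (1:ℚ)) - (P : ℚ⟦X⟧) := by
    rw [hPcoe]
    ext n
    simp only [PowerSeries.coeff_mk, map_sub]
    split_ifs <;> ring
  have hH2 : ((1 : ℚ⟦X⟧) - (1 - X) * (P : ℚ⟦X⟧)) *
      ((1 - X ^ d1) * (1 - X ^ d2) * (1 - X ^ d3)) =
      (1 - X) * ((1 - X ^ (a22 * d2)) * (1 - X ^ (a33 * d3))) := by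
    have key : (1 : ℚ⟦X⟧) - (1 - X) * (P : ℚ⟦X⟧) =
        (1 - X) * (PowerSeries.mk (fun _ => (1:ℚ)) - (P : ℚ⟦X⟧)) := by
      rw [mul_sub, one_sub_X_mul_mk_one]
    calc ((1 : ℚ⟦X⟧) - (1 - X) * (P : ℚ⟦X⟧)) * ((1 - X ^ d1) * (1 - X ^ d2) * (1 - X ^ d3))
        = ((1 - X) * (PowerSeries.mk (fun _ => (1:ℚ)) - (P : ℚ⟦X⟧))) *
          ((1 - X ^ d1) * (1 - X ^ d2) * (1 - X ^ d3)) := by rw [key]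
    _ = (1 - X) * ((PowerSeries.mk fun s =>
          if ∃ x1 x2 x3 : ℕ, s = x1 * d1 + x2 * d2 + x3 * d3 then (1 : ℚ) else 0) *
        ((1 - X ^ d1) * (1 - X ^ d2) * (1 - X ^ d3))) := by rw [hmk]; ring
    _ = (1 - X) * ((1 - X ^ (a22 * d2)) * (1 - X ^ (a33 * d3))) := by rw [hH]
  have hpoly : ((1 : Polynomial ℚ) - (1 - Polynomial.X) * P) *
      ((1 - Polynomial.X ^ d1) * (1 - Polynomial.X ^ d2) * (1 - Polynomial.X ^ d3)) =
      (1 - Polynomial.X) * ((1 - Polynomial.X ^ (a22 * d2)) * (1 - Polynomial.X ^ (a33 * d3))) := by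
    rw [← Polynomial.coe_inj]
    push_cast
    convert hH2 using 2 <;> push_cast <;> ring
  have hX : (1 - Polynomial.X : Polynomial ℚ) ≠ 0 := by
    intro h
    simpa using congrArg (Polynomial.eval 0) h
  rw [← one_sub_X_mul_sg d1, ← one_sub_X_mul_sg d2, ← one_sub_X_mul_sg d3,
    ← one_sub_X_mul_sg (a22 * d2), ← one_sub_X_mul_sg (a33 * d3)] at hpoly
  have star : ((1 : Polynomial ℚ) - (1 - Polynomial.X) * P) * (sg d1 * sg d2 * sg d3) =
      sg (a22 * d2) * sg (a33 * d3) := by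
    apply mul_left_cancel₀ (pow_ne_zero 3 hX)
    linear_combination hpoly
  have E0 := congrArg (Polynomial.eval 1) star
  have E1 := congrArg (Polynomial.eval 1) (congrArg Polynomial.derivative star)
  have E2 := congrArg (Polynomial.eval 1)
    (congrArg Polynomial.derivative (congrArg Polynomial.derivative star))
  simp only [Polynomial.derivative_mul, Polynomial.derivative_sub, Polynomial.derivative_one,
    Polynomial.derivative_X, Polynomial.derivative_add, Polynomial.eval_mul, Polynomial.eval_add,
    Polynomial.eval_sub, Polynomial.eval_one, Polynomial.eval_X, sg_eval, sg_deriv_eval,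
    sg_deriv2_eval, sub_self, zero_mul, mul_zero, zero_add, add_zero, one_mul, mul_one,
    zero_sub, sub_zero, neg_mul, neg_neg, Polynomial.eval_neg, Polynomial.derivative_neg] at E0 E1 E2
  push_cast at E0 E1 E2
  have hg1 : (Polynomial.derivative P).eval 1 = ∑ s ∈ hfin.toFinset, (s : ℚ) := by
    rw [hP]
    rw [map_sum]
    rw [Polynomial.eval_finset_sum]
    refine Finset.sum_congr rfl fun s _ => ?_
    rw [Polynomial.derivative_X_pow]
    simp
  have hD : ((d1:ℚ) * d2 * d3) ≠ 0 := by
    have p1 : 0 < d1 := by omega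
    have p2 : 0 < d2 := by omega
    have p3 : 0 < d3 := by omega
    exact (mul_pos (mul_pos (by exact_mod_cast p1 : (0:ℚ) < d1)
      (by exact_mod_cast p2 : (0:ℚ) < d2)) (by exact_mod_cast p3 : (0:ℚ) < d3)).ne'
  have hg0e : Polynomial.eval 1 P * ((d1:ℚ) * d2 * d3) =
      (((a22:ℚ)*d2 + (a33:ℚ)*d3 - ((d1:ℚ) + d2 + d3) + 1)/2) * ((d1:ℚ) * d2 * d3) := by
    linear_combination E1 - (((a22:ℚ)*d2 + (a33:ℚ)*d3 - 2)/2) * E0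
  have hg0 := mul_right_cancel₀ hD hg0e
  rw [hg0] at E2
  have key : 12 * (∑ s ∈ hfin.toFinset, (s : ℚ)) * ((d1:ℚ) * d2 * d3) =
      ((((d1:ℚ) + d2 + d3) - ((a22:ℚ) * d2 + (a33:ℚ) * d3)) *
          (((d1:ℚ) + d2 + d3) - 2 * ((a22:ℚ) * d2 + (a33:ℚ) * d3)) +
        ((d1:ℚ) * d2 + (d1:ℚ) * d3 + (d2:ℚ) * d3) - (d1:ℚ) * d2 * d3 - 1) * ((d1:ℚ) * d2 * d3) := by
    rw [← hg1]
    linear_combination 6 * E2 - (2*((a22:ℚ)*d2 + (a33:ℚ)*d3 - 2)^2 - ((a22:ℚ)*d2 + (a33:ℚ)*d3 - 2)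
      + 1 - ((a22:ℚ)*d2) * ((a33:ℚ)*d3) - (d1:ℚ)*d2*d3) * E0
  have final := mul_right_cancel₀ hD key
  rw [show (∑ s ∈ hfin.toFinset, (s:ℚ)) = ((∑ s ∈ hfin.toFinset, (s:ℤ) : ℤ) : ℚ) by
    push_cast; rfl] at final
  exact_mod_cast final
end

section
/- Let d1, d2, d3 with gcd 1 generate a non-symmetric numerical semigroup whose Hilbert series numerator is Q(z) = 1 − Σ_i z^{a_{ii} d_i} + z^{(⟨a,d⟩ − J)/2} + z^{(⟨a,d⟩ + J)/2}, where ⟨a,d⟩ = Σ a_{ii} d_i and J² = ⟨a,d⟩² − 4Σ_{i>j} a_{ii}a_{jj}d_i d_j + 4 d1 d2 d3. Then the number of gaps satisfies 2·g₀ = 1 − (d1+d2+d3) − a11 a22 a33 + ⟨a,d⟩. -/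
open Polynomial in
private lemma iterDerivAdd {k : ℕ} (p q : ℚ[X]) :
    derivative^[k] (p + q) = derivative^[k] p + derivative^[k] q := by
  induction k generalizing p q with
  | zero => simp
  | succ k ih => simp [Function.iterate_succ_apply, derivative_add, ih]

private lemma descQ (n k : ℕ) :
    ((n.descFactorial k : ℕ) : ℚ) = ∏ i ∈ Finset.range k, ((n : ℚ) - i) := by
  induction k with
  | zero => simp
  | succ k ih =>
    rw [Nat.descFactorial_succ, Nat.cast_mul, ih, Finset.prod_range_succ]
    rcases le_or_gt k n with h | h
    · rw [Nat.cast_sub h]; ring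
    · have hz : ((n : ℚ) - (n : ℕ)) = 0 := by simp
      rw [Finset.prod_eq_zero (Finset.mem_range.mpr h) hz, Nat.sub_eq_zero_of_le h.le]
      simp

open Polynomial in
private lemma evalD (n k : ℕ) :
    (Polynomial.derivative^[k] ((Polynomial.X : ℚ[X]) ^ n)).eval 1
      = ∏ i ∈ Finset.range k, ((n : ℚ) - i) := by
  rw [Polynomial.iterate_derivative_X_pow_eq_natCast_mul, ← descQ]
  simp

open Polynomial in
private lemma evalD4mul (p V : ℚ[X]) (h0 : V.eval 1 = 0)
    (h1 : (derivative^[1] V).eval 1 = 0) (h2 : (derivative^[2] V).eval 1 = 0)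
    (h3 : (derivative^[3] V).eval 1 = 0) :
    (derivative^[4] (p * V)).eval 1 = p.eval 1 * (derivative^[4] V).eval 1 := by
  have h1' := h1; have h2' := h2; have h3' := h3
  simp only [Function.iterate_succ_apply', Function.iterate_zero_apply] at h1' h2' h3'
  rw [Polynomial.iterate_derivative_mul]
  norm_num [Finset.sum_range_succ, h0, h1', h2', h3']

open PowerSeries in
open scoped Classical in
theorem nonsymmetric_semigroup_genus (d1 d2 d3 a11 a22 a33 J e1 e2 : ℕ)
    (h1 : 1 < d1) (h12 : d1 < d2) (h23 : d2 < d3)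
    (hgcd : Nat.gcd d1 (Nat.gcd d2 d3) = 1)
    (hJ : (J : ℤ) ^ 2 =
      ((a11 : ℤ) * d1 + (a22 : ℤ) * d2 + (a33 : ℤ) * d3) ^ 2 -
        4 * ((a11 : ℤ) * a22 * d1 * d2 + (a11 : ℤ) * a33 * d1 * d3 +
          (a22 : ℤ) * a33 * d2 * d3) + 4 * (d1 : ℤ) * d2 * d3)
    (he1 : 2 * e1 + J = a11 * d1 + a22 * d2 + a33 * d3)
    (he2 : 2 * e2 = a11 * d1 + a22 * d2 + a33 * d3 + J)
    (hfin : {s : ℕ | ¬ ∃ x1 x2 x3 : ℕ, s = x1 * d1 + x2 * d2 + x3 * d3}.Finite)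
    (hH : (PowerSeries.mk fun s =>
          if ∃ x1 x2 x3 : ℕ, s = x1 * d1 + x2 * d2 + x3 * d3 then (1 : ℚ) else 0) *
        ((1 - X ^ d1) * (1 - X ^ d2) * (1 - X ^ d3)) =
      1 - X ^ (a11 * d1) - X ^ (a22 * d2) - X ^ (a33 * d3) + X ^ e1 + X ^ e2) :
    (2 : ℤ) * hfin.toFinset.card =
      1 - ((d1 : ℤ) + d2 + d3) - (a11 : ℤ) * a22 * a33 +
        ((a11 : ℤ) * d1 + (a22 : ℤ) * d2 + (a33 : ℤ) * d3) := by
  -- the gap polynomial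
  set Gp : Polynomial ℚ := ∑ s ∈ hfin.toFinset, Polynomial.X ^ s with hGp
  set Wp : Polynomial ℚ :=
    (1 - Polynomial.X ^ d1) * (1 - Polynomial.X ^ d2) * (1 - Polynomial.X ^ d3) with hWp
  set Qp : Polynomial ℚ :=
    1 - Polynomial.X ^ (a11 * d1) - Polynomial.X ^ (a22 * d2) - Polynomial.X ^ (a33 * d3)
      + Polynomial.X ^ e1 + Polynomial.X ^ e2 with hQp
  -- power series facts
  have honemul : (PowerSeries.mk fun _ => (1 : ℚ)) * (1 - PowerSeries.X) = 1 := by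
    ext n
    rw [mul_sub, mul_one, map_sub]
    cases n with
    | zero => simp
    | succ n => simp [PowerSeries.coeff_succ_mul_X, PowerSeries.coeff_one]
  have hsum : (PowerSeries.mk fun s =>
        if ∃ x1 x2 x3 : ℕ, s = x1 * d1 + x2 * d2 + x3 * d3 then (1 : ℚ) else 0)
      + (Gp : PowerSeries ℚ) = PowerSeries.mk fun _ => (1 : ℚ) := by
    ext n
    have hc : Gp.coeff n = if n ∈ hfin.toFinset then (1 : ℚ) else 0 := by
      simp [hGp, Polynomial.finset_sum_coeff, Polynomial.coeff_X_pow]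
    rw [map_add, PowerSeries.coeff_mk, PowerSeries.coeff_mk, Polynomial.coeff_coe, hc]
    by_cases hn : ∃ x1 x2 x3 : ℕ, n = x1 * d1 + x2 * d2 + x3 * d3 <;>
      simp [hn, Set.Finite.mem_toFinset]
  -- the polynomial identity
  have hpoly : Qp * (1 - Polynomial.X) + Gp * ((1 - Polynomial.X) * Wp) = Wp := by
    rw [← Polynomial.coe_inj, hQp, hWp]
    push_cast [Polynomial.coe_add, Polynomial.coe_sub, Polynomial.coe_mul, Polynomial.coe_pow,
      Polynomial.coe_one, Polynomial.coe_X]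
    linear_combination (-(1 - PowerSeries.X)) * hH
      + ((1 - PowerSeries.X) *
          ((1 - PowerSeries.X ^ d1) * (1 - PowerSeries.X ^ d2) * (1 - PowerSeries.X ^ d3))) * hsum
      + ((1 - PowerSeries.X ^ d1) * (1 - PowerSeries.X ^ d2) * (1 - PowerSeries.X ^ d3)) * honemul
  -- expansions into monomials
  have hVexp : (1 - Polynomial.X) * Wp =
      ((Polynomial.X : Polynomial ℚ) ^ 0 - Polynomial.X ^ 1)
        - (Polynomial.X ^ d1 - Polynomial.X ^ (d1 + 1))
        - (Polynomial.X ^ d2 - Polynomial.X ^ (d2 + 1))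
        - (Polynomial.X ^ d3 - Polynomial.X ^ (d3 + 1))
        + (Polynomial.X ^ (d1 + d2) - Polynomial.X ^ (d1 + d2 + 1))
        + (Polynomial.X ^ (d1 + d3) - Polynomial.X ^ (d1 + d3 + 1))
        + (Polynomial.X ^ (d2 + d3) - Polynomial.X ^ (d2 + d3 + 1))
        - (Polynomial.X ^ (d1 + d2 + d3) - Polynomial.X ^ (d1 + d2 + d3 + 1)) := by
    rw [hWp]; ring
  have hWexp : Wp =
      ((Polynomial.X : Polynomial ℚ) ^ 0 - Polynomial.X ^ d1 - Polynomial.X ^ d2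
        - Polynomial.X ^ d3 + Polynomial.X ^ (d1 + d2) + Polynomial.X ^ (d1 + d3)
        + Polynomial.X ^ (d2 + d3) - Polynomial.X ^ (d1 + d2 + d3)) := by
    rw [hWp]; ring
  have hQexp : Qp * (1 - Polynomial.X) =
      ((Polynomial.X : Polynomial ℚ) ^ 0 - Polynomial.X ^ 1)
        - (Polynomial.X ^ (a11 * d1) - Polynomial.X ^ (a11 * d1 + 1))
        - (Polynomial.X ^ (a22 * d2) - Polynomial.X ^ (a22 * d2 + 1))
        - (Polynomial.X ^ (a33 * d3) - Polynomial.X ^ (a33 * d3 + 1))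
        + (Polynomial.X ^ e1 - Polynomial.X ^ (e1 + 1))
        + (Polynomial.X ^ e2 - Polynomial.X ^ (e2 + 1)) := by
    rw [hQp]; ring
  -- derivative evaluations
  have hV0 : ((1 - Polynomial.X) * Wp).eval 1 = 0 := by
    rw [hVexp]; simp
  have hV1 : (Polynomial.derivative^[1] ((1 - Polynomial.X) * Wp)).eval 1 = 0 := by
    rw [hVexp]
    simp only [Polynomial.iterate_derivative_sub, iterDerivAdd, Polynomial.eval_sub,
      Polynomial.eval_add, evalD, Finset.prod_range_succ, Finset.prod_range_zero, one_mul]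
    push_cast; ring
  have hV2 : (Polynomial.derivative^[2] ((1 - Polynomial.X) * Wp)).eval 1 = 0 := by
    rw [hVexp]
    simp only [Polynomial.iterate_derivative_sub, iterDerivAdd, Polynomial.eval_sub,
      Polynomial.eval_add, evalD, Finset.prod_range_succ, Finset.prod_range_zero, one_mul]
    push_cast; ring
  have hV3 : (Polynomial.derivative^[3] ((1 - Polynomial.X) * Wp)).eval 1 = 0 := by
    rw [hVexp]
    simp only [Polynomial.iterate_derivative_sub, iterDerivAdd, Polynomial.eval_sub,
      Polynomial.eval_add, evalD, Finset.prod_range_succ, Finset.prod_range_zero, one_mul]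
    push_cast; ring
  have hV4 : (Polynomial.derivative^[4] ((1 - Polynomial.X) * Wp)).eval 1
      = (24 : ℚ) * d1 * d2 * d3 := by
    rw [hVexp]
    simp only [Polynomial.iterate_derivative_sub, iterDerivAdd, Polynomial.eval_sub,
      Polynomial.eval_add, evalD, Finset.prod_range_succ, Finset.prod_range_zero, one_mul]
    push_cast; ring
  have hC : (Polynomial.derivative^[4] Wp).eval 1 =
      -12 * ((d1 : ℚ) * d2 * d3) * ((d1 : ℚ) + d2 + d3 - 3) := by
    rw [hWexp]
    simp only [Polynomial.iterate_derivative_sub, iterDerivAdd, Polynomial.eval_sub,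
      Polynomial.eval_add, evalD, Finset.prod_range_succ, Finset.prod_range_zero, one_mul]
    push_cast; ring
  have hA : (Polynomial.derivative^[4] (Qp * (1 - Polynomial.X))).eval 1 =
      4 * (((a11 : ℚ) * d1) * ((a11 : ℚ) * d1 - 1) * ((a11 : ℚ) * d1 - 2)
          + ((a22 : ℚ) * d2) * ((a22 : ℚ) * d2 - 1) * ((a22 : ℚ) * d2 - 2)
          + ((a33 : ℚ) * d3) * ((a33 : ℚ) * d3 - 1) * ((a33 : ℚ) * d3 - 2))
        - 4 * ((e1 : ℚ) * ((e1 : ℚ) - 1) * ((e1 : ℚ) - 2))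
        - 4 * ((e2 : ℚ) * ((e2 : ℚ) - 1) * ((e2 : ℚ) - 2)) := by
    rw [hQexp]
    simp only [Polynomial.iterate_derivative_sub, iterDerivAdd, Polynomial.eval_sub,
      Polynomial.eval_add, evalD, Finset.prod_range_succ, Finset.prod_range_zero, one_mul]
    push_cast; ring
  have hGcard : Gp.eval 1 = (hfin.toFinset.card : ℚ) := by
    rw [hGp, Polynomial.eval_finset_sum]
    simp
  have hB : (Polynomial.derivative^[4] (Gp * ((1 - Polynomial.X) * Wp))).eval 1 =
      (hfin.toFinset.card : ℚ) * (24 * d1 * d2 * d3) := by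
    rw [evalD4mul _ _ hV0 hV1 hV2 hV3, hV4, hGcard]
  -- the scalar equation
  have hscal : (Polynomial.derivative^[4] (Qp * (1 - Polynomial.X))).eval 1
      + (Polynomial.derivative^[4] (Gp * ((1 - Polynomial.X) * Wp))).eval 1
      = (Polynomial.derivative^[4] Wp).eval 1 := by
    rw [← Polynomial.eval_add, ← iterDerivAdd, hpoly]
  rw [hA, hB, hC] at hscal
  -- arithmetic endgame
  have h1q : 2 * (e1 : ℚ) + (J : ℚ) = (a11 : ℚ) * d1 + (a22 : ℚ) * d2 + (a33 : ℚ) * d3 := by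
    exact_mod_cast he1
  have h2q : 2 * (e2 : ℚ) = (a11 : ℚ) * d1 + (a22 : ℚ) * d2 + (a33 : ℚ) * d3 + (J : ℚ) := by
    exact_mod_cast he2
  have hJq : (J : ℚ) ^ 2 =
      ((a11 : ℚ) * d1 + (a22 : ℚ) * d2 + (a33 : ℚ) * d3) ^ 2 -
        4 * ((a11 : ℚ) * a22 * d1 * d2 + (a11 : ℚ) * a33 * d1 * d3 +
          (a22 : ℚ) * a33 * d2 * d3) + 4 * (d1 : ℚ) * d2 * d3 := by
    exact_mod_cast hJ
  have hE1 : (e1 : ℚ) = (((a11 : ℚ) * d1 + (a22 : ℚ) * d2 + (a33 : ℚ) * d3) - (J : ℚ)) / 2 := by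
    linarith
  have hE2 : (e2 : ℚ) = (((a11 : ℚ) * d1 + (a22 : ℚ) * d2 + (a33 : ℚ) * d3) + (J : ℚ)) / 2 := by
    linarith
  rw [hE1, hE2] at hscal
  have hd1 : (0 : ℚ) < d1 := by exact_mod_cast Nat.lt_trans Nat.zero_lt_one h1
  have hd2 : (0 : ℚ) < d2 := by exact_mod_cast Nat.lt_trans (Nat.lt_trans Nat.zero_lt_one h1) h12
  have hd3 : (0 : ℚ) < d3 := by
    exact_mod_cast Nat.lt_trans (Nat.lt_trans (Nat.lt_trans Nat.zero_lt_one h1) h12) h23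
  have hd : ((24 : ℚ) * d1 * d2 * d3) ≠ 0 := by positivity
  have hQgoal : (2 : ℚ) * (hfin.toFinset.card : ℚ) =
      1 - ((d1 : ℚ) + d2 + d3) - (a11 : ℚ) * a22 * a33 +
        ((a11 : ℚ) * d1 + (a22 : ℚ) * d2 + (a33 : ℚ) * d3) := by
    apply mul_left_cancel₀ hd
    linear_combination 2 * hscal +
      (6 * ((a11 : ℚ) * d1 + (a22 : ℚ) * d2 + (a33 : ℚ) * d3) - 12) * hJq
  exact_mod_cast hQgoal
end

section
/- Under the non-symmetric hypotheses above, the sum of the gaps satisfies 12·g₁ = ⟨a,d⟩(2⟨a,d⟩ − 3 s_d − 2 π_a) + s_d(s_d + 3 π_a) − Σ_{i≠j} a_{ii} a_{jj} d_i d_j + (d1d2 + d1d3 + d2d3) + d1d2d3 − 1, where s_d = d1+d2+d3, π_a = a11 a22 a33, ⟨a,d⟩ = Σ a_{ii} d_i. -/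
section GapHelpers
open Polynomial

private lemma chQ2 (m : ℕ) : (m.choose 2 : ℚ) * 2 = m * (m - 1) := by
  induction m with
  | zero => simp
  | succ n ih =>
    rw [Nat.choose_succ_succ, Nat.choose_one_right]
    push_cast
    linear_combination ih

private lemma chQ3 (m : ℕ) : (m.choose 3 : ℚ) * 6 = m * (m - 1) * (m - 2) := by
  induction m with
  | zero => simp
  | succ n ih =>
    rw [Nat.choose_succ_succ]
    push_cast
    linear_combination ih + 3 * chQ2 n

private lemma chQ4 (m : ℕ) : (m.choose 4 : ℚ) * 24 = m * (m - 1) * (m - 2) * (m - 3) := by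
  induction m with
  | zero => simp
  | succ n ih =>
    rw [Nat.choose_succ_succ]
    push_cast
    linear_combination ih + 4 * chQ3 n

private lemma coeffMul (p q : ℚ[X]) (n : ℕ) :
    (p * q).coeff n = ∑ i ∈ Finset.range (n + 1), p.coeff i * q.coeff (n - i) := by
  rw [Polynomial.coeff_mul, Finset.Nat.sum_antidiagonal_eq_sum_range_succ_mk]

private lemma taylorPow (p : ℚ[X]) (n : ℕ) :
    taylor (1 : ℚ) (p ^ n) = (taylor 1 p) ^ n := by
  induction n with
  | zero => simp [taylor_one]
  | succ n ih => rw [pow_succ, taylor_mul, ih, pow_succ]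

private lemma tay_u (d : ℕ) :
    taylor (1 : ℚ) (1 - Polynomial.X ^ d) = 1 - (Polynomial.X + 1) ^ d := by
  rw [map_sub, taylor_one, taylorPow, taylor_X]
  simp [Polynomial.C_1]

private lemma coeff_u (d k : ℕ) :
    ((1 : ℚ[X]) - (X + 1) ^ d).coeff k = (if k = 0 then (1:ℚ) else 0) - (d.choose k : ℚ) := by
  rw [Polynomial.coeff_sub, Polynomial.coeff_one, Polynomial.coeff_X_add_one_pow]

end GapHelpers

open PowerSeries in
open scoped Classical in
theorem nonsymmetric_semigroup_gap_sum (d1 d2 d3 a11 a22 a33 J e1 e2 : ℕ)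
    (h1 : 1 < d1) (h12 : d1 < d2) (h23 : d2 < d3)
    (hgcd : Nat.gcd d1 (Nat.gcd d2 d3) = 1)
    (hJ : (J : ℤ) ^ 2 =
      ((a11 : ℤ) * d1 + (a22 : ℤ) * d2 + (a33 : ℤ) * d3) ^ 2 -
        4 * ((a11 : ℤ) * a22 * d1 * d2 + (a11 : ℤ) * a33 * d1 * d3 +
          (a22 : ℤ) * a33 * d2 * d3) + 4 * (d1 : ℤ) * d2 * d3)
    (he1 : 2 * e1 + J = a11 * d1 + a22 * d2 + a33 * d3)
    (he2 : 2 * e2 = a11 * d1 + a22 * d2 + a33 * d3 + J)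
    (hfin : {s : ℕ | ¬ ∃ x1 x2 x3 : ℕ, s = x1 * d1 + x2 * d2 + x3 * d3}.Finite)
    (hH : (PowerSeries.mk fun s =>
          if ∃ x1 x2 x3 : ℕ, s = x1 * d1 + x2 * d2 + x3 * d3 then (1 : ℚ) else 0) *
        ((1 - X ^ d1) * (1 - X ^ d2) * (1 - X ^ d3)) =
      1 - X ^ (a11 * d1) - X ^ (a22 * d2) - X ^ (a33 * d3) + X ^ e1 + X ^ e2) :
    (12 : ℤ) * ∑ s ∈ hfin.toFinset, (s : ℤ) =
      ((a11 : ℤ) * d1 + (a22 : ℤ) * d2 + (a33 : ℤ) * d3) *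
          (2 * ((a11 : ℤ) * d1 + (a22 : ℤ) * d2 + (a33 : ℤ) * d3) -
            3 * ((d1 : ℤ) + d2 + d3) - 2 * ((a11 : ℤ) * a22 * a33)) +
        ((d1 : ℤ) + d2 + d3) * (((d1 : ℤ) + d2 + d3) + 3 * ((a11 : ℤ) * a22 * a33)) -
        2 * ((a11 : ℤ) * a22 * d1 * d2 + (a11 : ℤ) * a33 * d1 * d3 +
          (a22 : ℤ) * a33 * d2 * d3) +
        ((d1 : ℤ) * d2 + (d1 : ℤ) * d3 + (d2 : ℤ) * d3) + (d1 : ℤ) * d2 * d3 - 1 := by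
  set F : Finset ℕ := hfin.toFinset with hFdef
  set G : Polynomial ℚ := ∑ s ∈ F, Polynomial.X ^ s with hGdef
  set Dp : Polynomial ℚ :=
    (1 - Polynomial.X ^ d1) * (1 - Polynomial.X ^ d2) * (1 - Polynomial.X ^ d3) with hDdef
  set Rp : Polynomial ℚ := 1 - Polynomial.X ^ (a11 * d1) - Polynomial.X ^ (a22 * d2)
      - Polynomial.X ^ (a33 * d3) + Polynomial.X ^ e1 + Polynomial.X ^ e2 with hRdef
  -- Step 1: power series manipulations giving a polynomial identity
  have hmk1 : (PowerSeries.mk fun _ => (1:ℚ)) * (1 - PowerSeries.X) = 1 := by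
    ext n
    cases n with
    | zero => simp [mul_sub, PowerSeries.coeff_zero_mul_X]
    | succ n => simp [mul_sub, PowerSeries.coeff_succ_mul_X]
  have hGcoe : (G : PowerSeries ℚ) = PowerSeries.mk (fun n => if n ∈ F then (1:ℚ) else 0) := by
    ext n
    rw [PowerSeries.coeff_mk, hGdef, Polynomial.coeff_coe, Polynomial.finset_sum_coeff]
    simp only [Polynomial.coeff_X_pow]
    rw [Finset.sum_ite_eq]
  have hmkχ : (PowerSeries.mk fun s =>
        if ∃ x1 x2 x3 : ℕ, s = x1 * d1 + x2 * d2 + x3 * d3 then (1 : ℚ) else 0)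
      = (PowerSeries.mk fun _ => (1:ℚ)) - (G : PowerSeries ℚ) := by
    rw [hGcoe]
    ext n
    simp only [PowerSeries.coeff_mk, map_sub, hFdef, Set.Finite.mem_toFinset, Set.mem_setOf_eq]
    by_cases h : ∃ x1 x2 x3 : ℕ, n = x1 * d1 + x2 * d2 + x3 * d3 <;> simp [h]
  rw [hmkχ] at hH
  have hpoly : Dp = (1 - Polynomial.X) * (G * Dp + Rp) := by
    rw [← Polynomial.coe_inj]
    simp only [hDdef, hRdef, Polynomial.coe_mul, Polynomial.coe_add, Polynomial.coe_sub,
      Polynomial.coe_one, Polynomial.coe_pow, Polynomial.coe_X]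
    linear_combination (1 - PowerSeries.X (R := ℚ)) * hH
      - ((1 - PowerSeries.X ^ d1) * (1 - PowerSeries.X ^ d2) * (1 - PowerSeries.X ^ d3)) * hmk1
  -- Step 2: Taylor expansion at 1
  have hTD : Polynomial.taylor (1:ℚ) Dp
      = ((1 : Polynomial ℚ) - (Polynomial.X + 1) ^ d1) *
        (((1 : Polynomial ℚ) - (Polynomial.X + 1) ^ d2) *
         ((1 : Polynomial ℚ) - (Polynomial.X + 1) ^ d3)) := by
    rw [hDdef, Polynomial.taylor_mul, Polynomial.taylor_mul, tay_u, tay_u, tay_u, mul_assoc]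
  have hTR : Polynomial.taylor (1:ℚ) Rp
      = 1 - (Polynomial.X + 1) ^ (a11 * d1) - (Polynomial.X + 1) ^ (a22 * d2)
        - (Polynomial.X + 1) ^ (a33 * d3) + (Polynomial.X + 1) ^ e1 + (Polynomial.X + 1) ^ e2 := by
    rw [hRdef]
    simp only [map_add, map_sub, Polynomial.taylor_one, taylorPow, Polynomial.taylor_X,
      Polynomial.C_1]
  have hTG : Polynomial.taylor (1:ℚ) G = ∑ s ∈ F, (Polynomial.X + 1) ^ s := by
    rw [hGdef, map_sum]
    simp only [taylorPow, Polynomial.taylor_X, Polynomial.C_1]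
  have htay : Polynomial.taylor (1:ℚ) Dp
      = -(Polynomial.X * (Polynomial.taylor (1:ℚ) G * Polynomial.taylor (1:ℚ) Dp
          + Polynomial.taylor (1:ℚ) Rp)) := by
    conv_lhs => rw [hpoly]
    rw [Polynomial.taylor_mul, map_add, Polynomial.taylor_mul, map_sub, Polynomial.taylor_one,
      Polynomial.taylor_X, Polynomial.C_1]
    ring
  -- Step 3: coefficients of the Taylor expansions
  have hv0 : ((((1 : Polynomial ℚ) - (Polynomial.X + 1) ^ d2) *
      ((1 : Polynomial ℚ) - (Polynomial.X + 1) ^ d3))).coeff 0 = 0 := by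
    rw [coeffMul]
    simp only [Finset.sum_range_succ, Finset.sum_range_zero, coeff_u]
    norm_num
  have hv1 : ((((1 : Polynomial ℚ) - (Polynomial.X + 1) ^ d2) *
      ((1 : Polynomial ℚ) - (Polynomial.X + 1) ^ d3))).coeff 1 = 0 := by
    rw [coeffMul]
    simp only [Finset.sum_range_succ, Finset.sum_range_zero, coeff_u]
    norm_num
  have hv2 : ((((1 : Polynomial ℚ) - (Polynomial.X + 1) ^ d2) *
      ((1 : Polynomial ℚ) - (Polynomial.X + 1) ^ d3))).coeff 2 = (d2:ℚ) * d3 := by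
    rw [coeffMul]
    simp only [Finset.sum_range_succ, Finset.sum_range_zero, coeff_u]
    norm_num [Nat.choose_one_right]
  have hv3 : ((((1 : Polynomial ℚ) - (Polynomial.X + 1) ^ d2) *
      ((1 : Polynomial ℚ) - (Polynomial.X + 1) ^ d3))).coeff 3
      = (d2:ℚ) * (d3.choose 2 : ℚ) + (d2.choose 2 : ℚ) * d3 := by
    rw [coeffMul]
    simp only [Finset.sum_range_succ, Finset.sum_range_zero, coeff_u]
    norm_num [Nat.choose_one_right]
  have hv4 : ((((1 : Polynomial ℚ) - (Polynomial.X + 1) ^ d2) *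
      ((1 : Polynomial ℚ) - (Polynomial.X + 1) ^ d3))).coeff 4
      = (d2:ℚ) * (d3.choose 3 : ℚ) + (d2.choose 2 : ℚ) * (d3.choose 2 : ℚ)
        + (d2.choose 3 : ℚ) * d3 := by
    rw [coeffMul]
    simp only [Finset.sum_range_succ, Finset.sum_range_zero, coeff_u]
    norm_num [Nat.choose_one_right]
  have hTD0 : (Polynomial.taylor (1:ℚ) Dp).coeff 0 = 0 := by
    rw [hTD, coeffMul]
    simp only [Finset.sum_range_succ, Finset.sum_range_zero, coeff_u, hv0]
    norm_num
  have hTD1 : (Polynomial.taylor (1:ℚ) Dp).coeff 1 = 0 := by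
    rw [hTD, coeffMul]
    simp only [Finset.sum_range_succ, Finset.sum_range_zero, coeff_u, hv0, hv1]
    norm_num
  have hTD2 : (Polynomial.taylor (1:ℚ) Dp).coeff 2 = 0 := by
    rw [hTD, coeffMul]
    simp only [Finset.sum_range_succ, Finset.sum_range_zero, coeff_u, hv0, hv1, hv2]
    norm_num
  have hTD3 : (Polynomial.taylor (1:ℚ) Dp).coeff 3 = -((d1:ℚ) * d2 * d3) := by
    rw [hTD, coeffMul]
    simp only [Finset.sum_range_succ, Finset.sum_range_zero, coeff_u, hv0, hv1, hv2, hv3]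
    norm_num [Nat.choose_one_right]
    ring
  have hTD4 : (Polynomial.taylor (1:ℚ) Dp).coeff 4
      = -((d1.choose 2 : ℚ) * d2 * d3 + (d1:ℚ) * (d2:ℚ) * (d3.choose 2 : ℚ)
          + (d1:ℚ) * (d2.choose 2 : ℚ) * d3) := by
    rw [hTD, coeffMul]
    simp only [Finset.sum_range_succ, Finset.sum_range_zero, coeff_u, hv0, hv1, hv2, hv3, hv4]
    norm_num [Nat.choose_one_right]
    ring
  have hTD5 : (Polynomial.taylor (1:ℚ) Dp).coeff 5
      = -((d1:ℚ) * ((d2:ℚ) * (d3.choose 3 : ℚ) + (d2.choose 2 : ℚ) * (d3.choose 2 : ℚ)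
            + (d2.choose 3 : ℚ) * d3)
          + (d1.choose 2 : ℚ) * ((d2:ℚ) * (d3.choose 2 : ℚ) + (d2.choose 2 : ℚ) * d3)
          + (d1.choose 3 : ℚ) * (d2:ℚ) * d3) := by
    rw [hTD, coeffMul]
    simp only [Finset.sum_range_succ, Finset.sum_range_zero, coeff_u, hv0, hv1, hv2, hv3, hv4]
    norm_num [Nat.choose_one_right]
    ring
  have hTR3 : (Polynomial.taylor (1:ℚ) Rp).coeff 3
      = -(((a11 * d1).choose 3 : ℚ)) - ((a22 * d2).choose 3 : ℚ) - ((a33 * d3).choose 3 : ℚ)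
        + (e1.choose 3 : ℚ) + (e2.choose 3 : ℚ) := by
    rw [hTR]
    simp [Polynomial.coeff_sub, Polynomial.coeff_add, Polynomial.coeff_one,
      Polynomial.coeff_X_add_one_pow]
  have hTR4 : (Polynomial.taylor (1:ℚ) Rp).coeff 4
      = -(((a11 * d1).choose 4 : ℚ)) - ((a22 * d2).choose 4 : ℚ) - ((a33 * d3).choose 4 : ℚ)
        + (e1.choose 4 : ℚ) + (e2.choose 4 : ℚ) := by
    rw [hTR]
    simp [Polynomial.coeff_sub, Polynomial.coeff_add, Polynomial.coeff_one,
      Polynomial.coeff_X_add_one_pow]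
  have hTG0 : (Polynomial.taylor (1:ℚ) G).coeff 0 = (F.card : ℚ) := by
    rw [hTG, Polynomial.finset_sum_coeff]
    simp [Polynomial.coeff_X_add_one_pow]
  have hTG1 : (Polynomial.taylor (1:ℚ) G).coeff 1 = ∑ s ∈ F, (s:ℚ) := by
    rw [hTG, Polynomial.finset_sum_coeff]
    simp [Polynomial.coeff_X_add_one_pow, Nat.choose_one_right]
  -- Step 4: the two coefficient equations
  have hc4 : (Polynomial.taylor (1:ℚ) Dp).coeff 4
      = -((Polynomial.taylor (1:ℚ) G).coeff 0 * (Polynomial.taylor (1:ℚ) Dp).coeff 3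
          + (Polynomial.taylor (1:ℚ) Rp).coeff 3) := by
    conv_lhs => rw [htay]
    rw [Polynomial.coeff_neg, show (4:ℕ) = 3+1 from rfl, Polynomial.coeff_X_mul,
      Polynomial.coeff_add, coeffMul]
    simp only [Finset.sum_range_succ, Finset.sum_range_zero]
    norm_num [hTD0, hTD1, hTD2]
  have hc5 : (Polynomial.taylor (1:ℚ) Dp).coeff 5
      = -(((Polynomial.taylor (1:ℚ) G).coeff 0 * (Polynomial.taylor (1:ℚ) Dp).coeff 4
          + (Polynomial.taylor (1:ℚ) G).coeff 1 * (Polynomial.taylor (1:ℚ) Dp).coeff 3)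
          + (Polynomial.taylor (1:ℚ) Rp).coeff 4) := by
    conv_lhs => rw [htay]
    rw [Polynomial.coeff_neg, show (5:ℕ) = 4+1 from rfl, Polynomial.coeff_X_mul,
      Polynomial.coeff_add, coeffMul]
    simp only [Finset.sum_range_succ, Finset.sum_range_zero]
    norm_num [hTD0, hTD1, hTD2]
  -- Step 5: arithmetic over ℚ
  rw [hTG0, hTD3, hTD4, hTR3] at hc4
  rw [hTG0, hTG1, hTD3, hTD4, hTD5, hTR4] at hc5
  have hC2d1 : (d1.choose 2 : ℚ) = ((d1:ℚ)*((d1:ℚ)-1))/2 := by linear_combination (chQ2 d1)/2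
  have hC2d2 : (d2.choose 2 : ℚ) = ((d2:ℚ)*((d2:ℚ)-1))/2 := by linear_combination (chQ2 d2)/2
  have hC2d3 : (d3.choose 2 : ℚ) = ((d3:ℚ)*((d3:ℚ)-1))/2 := by linear_combination (chQ2 d3)/2
  have hC3d1 : (d1.choose 3 : ℚ) = ((d1:ℚ)*((d1:ℚ)-1)*((d1:ℚ)-2))/6 := by
    linear_combination (chQ3 d1)/6
  have hC3d2 : (d2.choose 3 : ℚ) = ((d2:ℚ)*((d2:ℚ)-1)*((d2:ℚ)-2))/6 := by
    linear_combination (chQ3 d2)/6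
  have hC3d3 : (d3.choose 3 : ℚ) = ((d3:ℚ)*((d3:ℚ)-1)*((d3:ℚ)-2))/6 := by
    linear_combination (chQ3 d3)/6
  have hCA13 : ((a11 * d1).choose 3 : ℚ)
      = ((a11:ℚ)*d1*((a11:ℚ)*d1-1)*((a11:ℚ)*d1-2))/6 := by
    have h := chQ3 (a11 * d1); push_cast at h; linear_combination h/6
  have hCA23 : ((a22 * d2).choose 3 : ℚ)
      = ((a22:ℚ)*d2*((a22:ℚ)*d2-1)*((a22:ℚ)*d2-2))/6 := by
    have h := chQ3 (a22 * d2); push_cast at h; linear_combination h/6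
  have hCA33 : ((a33 * d3).choose 3 : ℚ)
      = ((a33:ℚ)*d3*((a33:ℚ)*d3-1)*((a33:ℚ)*d3-2))/6 := by
    have h := chQ3 (a33 * d3); push_cast at h; linear_combination h/6
  have hCA14 : ((a11 * d1).choose 4 : ℚ)
      = ((a11:ℚ)*d1*((a11:ℚ)*d1-1)*((a11:ℚ)*d1-2)*((a11:ℚ)*d1-3))/24 := by
    have h := chQ4 (a11 * d1); push_cast at h; linear_combination h/24
  have hCA24 : ((a22 * d2).choose 4 : ℚ)
      = ((a22:ℚ)*d2*((a22:ℚ)*d2-1)*((a22:ℚ)*d2-2)*((a22:ℚ)*d2-3))/24 := by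
    have h := chQ4 (a22 * d2); push_cast at h; linear_combination h/24
  have hCA34 : ((a33 * d3).choose 4 : ℚ)
      = ((a33:ℚ)*d3*((a33:ℚ)*d3-1)*((a33:ℚ)*d3-2)*((a33:ℚ)*d3-3))/24 := by
    have h := chQ4 (a33 * d3); push_cast at h; linear_combination h/24
  rw [hC2d1, hC2d2, hC2d3, hCA13, hCA23, hCA33] at hc4
  rw [hC2d1, hC2d2, hC2d3, hC3d1, hC3d2, hC3d3, hCA14, hCA24, hCA34] at hc5
  -- relations between e1, e2, J and the data
  have hJQ : (J:ℚ)^2 = ((a11:ℚ)*d1 + (a22:ℚ)*d2 + (a33:ℚ)*d3)^2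
      - 4*((a11:ℚ)*a22*d1*d2 + (a11:ℚ)*a33*d1*d3 + (a22:ℚ)*a33*d2*d3)
      + 4*(d1:ℚ)*d2*d3 := by exact_mod_cast hJ
  have h1Q : 2*(e1:ℚ) + J = (a11:ℚ)*d1 + (a22:ℚ)*d2 + (a33:ℚ)*d3 := by exact_mod_cast he1
  have h2Q : 2*(e2:ℚ) = (a11:ℚ)*d1 + (a22:ℚ)*d2 + (a33:ℚ)*d3 + J := by exact_mod_cast he2
  have hsumE : (e1:ℚ) + e2 = (a11:ℚ)*d1 + (a22:ℚ)*d2 + (a33:ℚ)*d3 := by linear_combination (h1Q + h2Q)/2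
  have hdiffE : (e2:ℚ) - e1 = J := by linear_combination (h2Q - h1Q)/2
  have hprodE : (e1:ℚ)*e2 = ((a11:ℚ)*a22*d1*d2 + (a11:ℚ)*a33*d1*d3 + (a22:ℚ)*a33*d2*d3)
      - (d1:ℚ)*d2*d3 := by
    linear_combination ((((a11:ℚ)*d1 + (a22:ℚ)*d2 + (a33:ℚ)*d3) + e1 + e2)*hsumE
      - (((J:ℚ)) + (e2:ℚ) - e1)*hdiffE - hJQ)/4
  have hp2 : (e1:ℚ)^2 + (e2:ℚ)^2
      = ((a11:ℚ)*d1 + (a22:ℚ)*d2 + (a33:ℚ)*d3)^2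
        - 2*(((a11:ℚ)*a22*d1*d2 + (a11:ℚ)*a33*d1*d3 + (a22:ℚ)*a33*d2*d3) - (d1:ℚ)*d2*d3) := by
    linear_combination ((e1:ℚ) + e2 + ((a11:ℚ)*d1 + (a22:ℚ)*d2 + (a33:ℚ)*d3))*hsumE - 2*hprodE
  have hp3 : (e1:ℚ)^3 + (e2:ℚ)^3
      = ((a11:ℚ)*d1 + (a22:ℚ)*d2 + (a33:ℚ)*d3)^3
        - 3*((a11:ℚ)*d1 + (a22:ℚ)*d2 + (a33:ℚ)*d3)
          *(((a11:ℚ)*a22*d1*d2 + (a11:ℚ)*a33*d1*d3 + (a22:ℚ)*a33*d2*d3) - (d1:ℚ)*d2*d3) := by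
    linear_combination (((e1:ℚ)+e2)^2 + ((e1:ℚ)+e2)*((a11:ℚ)*d1 + (a22:ℚ)*d2 + (a33:ℚ)*d3)
        + ((a11:ℚ)*d1 + (a22:ℚ)*d2 + (a33:ℚ)*d3)^2
        - 3*(((a11:ℚ)*a22*d1*d2 + (a11:ℚ)*a33*d1*d3 + (a22:ℚ)*a33*d2*d3) - (d1:ℚ)*d2*d3))*hsumE
      - 3*((e1:ℚ)+e2)*hprodE
  have hp4 : (e1:ℚ)^4 + (e2:ℚ)^4
      = ((a11:ℚ)*d1 + (a22:ℚ)*d2 + (a33:ℚ)*d3)^4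
        - 4*((a11:ℚ)*d1 + (a22:ℚ)*d2 + (a33:ℚ)*d3)^2
          *(((a11:ℚ)*a22*d1*d2 + (a11:ℚ)*a33*d1*d3 + (a22:ℚ)*a33*d2*d3) - (d1:ℚ)*d2*d3)
        + 2*(((a11:ℚ)*a22*d1*d2 + (a11:ℚ)*a33*d1*d3 + (a22:ℚ)*a33*d2*d3) - (d1:ℚ)*d2*d3)^2 := by
    linear_combination (((e1:ℚ)+e2)^3 + ((e1:ℚ)+e2)^2*((a11:ℚ)*d1 + (a22:ℚ)*d2 + (a33:ℚ)*d3)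
        + ((e1:ℚ)+e2)*((a11:ℚ)*d1 + (a22:ℚ)*d2 + (a33:ℚ)*d3)^2
        + ((a11:ℚ)*d1 + (a22:ℚ)*d2 + (a33:ℚ)*d3)^3
        - 4*((e1:ℚ)*e2)*(((e1:ℚ)+e2) + ((a11:ℚ)*d1 + (a22:ℚ)*d2 + (a33:ℚ)*d3)))*hsumE
      + (-4*((a11:ℚ)*d1 + (a22:ℚ)*d2 + (a33:ℚ)*d3)^2 + 2*((e1:ℚ)*e2
        + (((a11:ℚ)*a22*d1*d2 + (a11:ℚ)*a33*d1*d3 + (a22:ℚ)*a33*d2*d3) - (d1:ℚ)*d2*d3)))*hprodE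
  have hce3 : (e1.choose 3 : ℚ) + (e2.choose 3 : ℚ)
      = (((a11:ℚ)*d1 + (a22:ℚ)*d2 + (a33:ℚ)*d3)^3
        - 3*((a11:ℚ)*d1 + (a22:ℚ)*d2 + (a33:ℚ)*d3)
          *(((a11:ℚ)*a22*d1*d2 + (a11:ℚ)*a33*d1*d3 + (a22:ℚ)*a33*d2*d3) - (d1:ℚ)*d2*d3)
        - 3*(((a11:ℚ)*d1 + (a22:ℚ)*d2 + (a33:ℚ)*d3)^2
          - 2*(((a11:ℚ)*a22*d1*d2 + (a11:ℚ)*a33*d1*d3 + (a22:ℚ)*a33*d2*d3) - (d1:ℚ)*d2*d3))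
        + 2*((a11:ℚ)*d1 + (a22:ℚ)*d2 + (a33:ℚ)*d3))/6 := by
    linear_combination (chQ3 e1)/6 + (chQ3 e2)/6 + hp3/6 - hp2/2 + hsumE/3
  have hce4 : (e1.choose 4 : ℚ) + (e2.choose 4 : ℚ)
      = ((((a11:ℚ)*d1 + (a22:ℚ)*d2 + (a33:ℚ)*d3)^4
        - 4*((a11:ℚ)*d1 + (a22:ℚ)*d2 + (a33:ℚ)*d3)^2
          *(((a11:ℚ)*a22*d1*d2 + (a11:ℚ)*a33*d1*d3 + (a22:ℚ)*a33*d2*d3) - (d1:ℚ)*d2*d3)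
        + 2*(((a11:ℚ)*a22*d1*d2 + (a11:ℚ)*a33*d1*d3 + (a22:ℚ)*a33*d2*d3) - (d1:ℚ)*d2*d3)^2)
        - 6*(((a11:ℚ)*d1 + (a22:ℚ)*d2 + (a33:ℚ)*d3)^3
          - 3*((a11:ℚ)*d1 + (a22:ℚ)*d2 + (a33:ℚ)*d3)
            *(((a11:ℚ)*a22*d1*d2 + (a11:ℚ)*a33*d1*d3 + (a22:ℚ)*a33*d2*d3) - (d1:ℚ)*d2*d3))
        + 11*(((a11:ℚ)*d1 + (a22:ℚ)*d2 + (a33:ℚ)*d3)^2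
          - 2*(((a11:ℚ)*a22*d1*d2 + (a11:ℚ)*a33*d1*d3 + (a22:ℚ)*a33*d2*d3) - (d1:ℚ)*d2*d3))
        - 6*((a11:ℚ)*d1 + (a22:ℚ)*d2 + (a33:ℚ)*d3))/24 := by
    linear_combination (chQ4 e1)/24 + (chQ4 e2)/24 + hp4/24 - hp3/4 + 11*hp2/24 - hsumE/4
  -- the key identity, with the nonzero factor (d1*d2*d3)^2
  have key : ((12:ℚ) * ∑ s ∈ F, (s:ℚ)) * (((d1:ℚ)*d2*d3) * ((d1:ℚ)*d2*d3))
      = (((a11:ℚ)*d1 + (a22:ℚ)*d2 + (a33:ℚ)*d3)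
          * (2*((a11:ℚ)*d1 + (a22:ℚ)*d2 + (a33:ℚ)*d3)
            - 3*((d1:ℚ) + d2 + d3) - 2*((a11:ℚ)*a22*a33))
        + ((d1:ℚ) + d2 + d3)*(((d1:ℚ) + d2 + d3) + 3*((a11:ℚ)*a22*a33))
        - 2*((a11:ℚ)*a22*d1*d2 + (a11:ℚ)*a33*d1*d3 + (a22:ℚ)*a33*d2*d3)
        + ((d1:ℚ)*d2 + (d1:ℚ)*d3 + (d2:ℚ)*d3) + (d1:ℚ)*d2*d3 - 1)
        * (((d1:ℚ)*d2*d3) * ((d1:ℚ)*d2*d3)) := by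
    linear_combination (-12*((d1:ℚ)*d2*d3))*hc5
      + (-12*(-(((d1:ℚ)*((d1:ℚ)-1))/2*d2*d3 + (d1:ℚ)*(d2:ℚ)*(((d3:ℚ)*((d3:ℚ)-1))/2)
          + (d1:ℚ)*(((d2:ℚ)*((d2:ℚ)-1))/2)*d3)))*hc4
      + (12*(-(((d1:ℚ)*((d1:ℚ)-1))/2*d2*d3 + (d1:ℚ)*(d2:ℚ)*(((d3:ℚ)*((d3:ℚ)-1))/2)
          + (d1:ℚ)*(((d2:ℚ)*((d2:ℚ)-1))/2)*d3)))*hce3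
      + (12*((d1:ℚ)*d2*d3))*hce4
  have hd1 : ((d1:ℚ)) ≠ 0 := Nat.cast_ne_zero.mpr (by omega)
  have hd2 : ((d2:ℚ)) ≠ 0 := Nat.cast_ne_zero.mpr (by omega)
  have hd3 : ((d3:ℚ)) ≠ 0 := Nat.cast_ne_zero.mpr (by omega)
  have hPd : ((d1:ℚ)*d2*d3) ≠ 0 := mul_ne_zero (mul_ne_zero hd1 hd2) hd3
  have hfinQ := mul_right_cancel₀ (mul_ne_zero hPd hPd) key
  apply Int.cast_injective (α := ℚ)
  push_cast
  linear_combination hfinQ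
end

section
/- Let d1, d2 be coprime with 1 < d1 < d2. Then for all n ≥ 0, Σ_{s ∈ Δ(d1,d2)} sⁿ = −B_{n+1}/(n+1) − (1/(d1 d2 (n+1)(n+2)))·[B_{n+2}^{(2)}(0 | d1,d2) − B_{n+2}^{(2)}(d1 d2 | d1,d2)], where B_{n+2}^{(2)}(x | d1,d2) = Σ_{j=0}^{n+2} Σ_{k=0}^{j} C(n+2,j) C(j,k) d1^{j−k} d2^{n+2−j} B_{j−k} B_{n+2−j} x^k. -/
open PowerSeries Finset Nat

lemma auxT (d : ℕ) (hd : 0 < d) :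
    (1 - (PowerSeries.X : ℚ⟦X⟧) ^ d) * PowerSeries.mk (fun s => if d ∣ s then (1:ℚ) else 0) = 1 := by
  ext n
  simp only [sub_mul, one_mul, map_sub, coeff_X_pow_mul', coeff_mk, coeff_one]
  by_cases hle : d ≤ n
  · have hiff : d ∣ n ↔ d ∣ n - d := by
      constructor
      · intro h; exact Nat.dvd_sub h dvd_rfl
      · intro h; have := Nat.dvd_add h (dvd_refl d); rwa [Nat.sub_add_cancel hle] at this
    have hn0 : ¬ (n = 0) := by omega
    simp [hle, hn0, ← hiff]
  · have hiff : d ∣ n ↔ n = 0 := by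
      constructor
      · intro h
        rcases Nat.eq_zero_or_pos n with rfl | hn
        · rfl
        · exact absurd (Nat.le_of_dvd hn h) hle
      · rintro rfl; exact dvd_zero d
    simp [hle, hiff]

lemma auxG (d1 d2 : ℕ) :
    (1 - (PowerSeries.X : ℚ⟦X⟧) ^ d1) * (∑ a ∈ Finset.range d2, (PowerSeries.X : ℚ⟦X⟧) ^ (a * d1)) =
      1 - PowerSeries.X ^ (d1 * d2) := by
  have h := geom_sum_mul ((PowerSeries.X : ℚ⟦X⟧) ^ d1) d2
  have h2 : ∀ a : ℕ, ((PowerSeries.X : ℚ⟦X⟧) ^ d1) ^ a = PowerSeries.X ^ (a * d1) := by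
    intro a; rw [← pow_mul, Nat.mul_comm]
  simp only [h2] at h
  rw [Nat.mul_comm d1 d2]
  linear_combination -h

open scoped Classical in
lemma auxR (d1 d2 : ℕ) (h1 : 0 < d1) (h2 : 0 < d2) (hcop : Nat.gcd d1 d2 = 1) :
    PowerSeries.mk (fun s => if ∃ x1 x2 : ℕ, s = x1 * d1 + x2 * d2 then (1:ℚ) else 0) =
      (∑ a ∈ Finset.range d2, (PowerSeries.X : ℚ⟦X⟧) ^ (a * d1)) *
        PowerSeries.mk (fun s => if d2 ∣ s then (1:ℚ) else 0) := by
  have hcopZ : IsCoprime (d2 : ℤ) (d1 : ℤ) := by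
    rw [Int.isCoprime_iff_gcd_eq_one, Int.gcd_natCast_natCast, Nat.gcd_comm]
    exact hcop
  ext s
  rw [coeff_mk, Finset.sum_mul, map_sum]
  have key : ∀ a : ℕ, (PowerSeries.coeff s)
      ((PowerSeries.X : ℚ⟦X⟧) ^ (a * d1) * PowerSeries.mk (fun s => if d2 ∣ s then (1:ℚ) else 0))
      = if (a * d1 ≤ s ∧ d2 ∣ s - a * d1) then 1 else 0 := by
    intro a
    rw [coeff_X_pow_mul', coeff_mk]
    split_ifs with hh1 hh2 hh3 hh4 <;> first | rfl | tauto
  simp only [key]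
  rw [Finset.sum_boole]
  by_cases hrep : ∃ x1 x2 : ℕ, s = x1 * d1 + x2 * d2
  · rw [if_pos hrep]
    obtain ⟨x1, x2, hs⟩ := hrep
    set a0 := x1 % d2 with ha0
    have ha0lt : a0 < d2 := Nat.mod_lt _ h2
    have hmoddiv : a0 + d2 * (x1 / d2) = x1 := Nat.mod_add_div x1 d2
    have hP0 : a0 * d1 ≤ s ∧ d2 ∣ s - a0 * d1 := by
      constructor
      · calc a0 * d1 ≤ x1 * d1 := Nat.mul_le_mul_right _ (Nat.mod_le _ _)
          _ ≤ s := by omega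
      · have : s - a0 * d1 = d2 * (x1 / d2) * d1 + x2 * d2 := by
          have : x1 * d1 = a0 * d1 + d2 * (x1 / d2) * d1 := by
            rw [← Nat.add_mul, hmoddiv]
          omega
        rw [this]
        exact Nat.dvd_add (Dvd.dvd.mul_right (Dvd.dvd.mul_right dvd_rfl _) _) (Dvd.intro_left _ rfl)
    have hfilter : (Finset.range d2).filter (fun a => a * d1 ≤ s ∧ d2 ∣ s - a * d1) = {a0} := by
      apply Finset.eq_singleton_iff_unique_mem.mpr
      constructor
      · exact Finset.mem_filter.mpr ⟨Finset.mem_range.mpr ha0lt, hP0⟩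
      · intro a ha
        have hm := Finset.mem_filter.mp ha
        have har := Finset.mem_range.mp hm.1
        obtain ⟨hle, hdvd⟩ := hm.2
        -- uniqueness via integers
        have hz1 : (d2 : ℤ) ∣ (s : ℤ) - a * d1 := by
          obtain ⟨c, hc⟩ := hdvd
          refine ⟨c, ?_⟩
          have := Nat.sub_add_cancel hle
          push_cast [← hc]
          omega
        have hz0 : (d2 : ℤ) ∣ (s : ℤ) - a0 * d1 := by
          obtain ⟨c, hc⟩ := hP0.2
          refine ⟨c, ?_⟩
          have := Nat.sub_add_cancel hP0.1
          push_cast [← hc]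
          omega
        have hdiff : (d2 : ℤ) ∣ ((a0 : ℤ) - a) * d1 := by
          have := dvd_sub hz1 hz0
          have heq : (s : ℤ) - a * d1 - ((s : ℤ) - a0 * d1) = ((a0 : ℤ) - a) * d1 := by ring
          rwa [heq] at this
        have hdvd2 : (d2 : ℤ) ∣ ((a0 : ℤ) - a) := hcopZ.dvd_of_dvd_mul_right hdiff
        have : (a0 : ℤ) - a = 0 := by
          refine Int.eq_zero_of_abs_lt_dvd hdvd2 ?_
          rw [abs_lt]
          constructor <;> push_cast <;> omega
        omega
    rw [hfilter]
    simp
  · rw [if_neg hrep]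
    have hfilter : (Finset.range d2).filter (fun a => a * d1 ≤ s ∧ d2 ∣ s - a * d1) = ∅ := by
      apply Finset.filter_eq_empty_iff.mpr
      intro a _ 
      rintro ⟨hle, hdvd⟩
      obtain ⟨c, hc⟩ := hdvd
      exact hrep ⟨a, c, by rw [Nat.mul_comm c d2]; omega⟩
    rw [hfilter]
    simp

open scoped Classical in
lemma polyIdent (d1 d2 : ℕ) (h1 : 0 < d1) (h2 : 0 < d2) (hcop : Nat.gcd d1 d2 = 1)
    (hfin : {s : ℕ | ¬ ∃ x1 x2 : ℕ, s = x1 * d1 + x2 * d2}.Finite) :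
    (∑ s ∈ hfin.toFinset, (Polynomial.X : Polynomial ℚ) ^ s) *
      ((1 - Polynomial.X) * (1 - Polynomial.X ^ d1) * (1 - Polynomial.X ^ d2)) =
      (1 - Polynomial.X ^ d1) * (1 - Polynomial.X ^ d2) -
        (1 - Polynomial.X ^ (d1 * d2)) * (1 - Polynomial.X) := by
  classical
  rw [← Polynomial.coe_inj]
  push_cast [Polynomial.coe_mul, Polynomial.coe_sub, Polynomial.coe_one, Polynomial.coe_pow,
    Polynomial.coe_X]
  rw [show ((↑(∑ s ∈ hfin.toFinset, (Polynomial.X : Polynomial ℚ) ^ s) : ℚ⟦X⟧)) =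
      ∑ s ∈ hfin.toFinset, (PowerSeries.X : ℚ⟦X⟧) ^ s from by
    rw [← Polynomial.coeToPowerSeries.ringHom_apply, map_sum]
    simp [Polynomial.coeToPowerSeries.ringHom_apply, Polynomial.coe_pow, Polynomial.coe_X]]
  -- now pure power series identity
  have hD : (∑ s ∈ hfin.toFinset, (PowerSeries.X : ℚ⟦X⟧) ^ s) =
      PowerSeries.mk (fun s => (1:ℚ)) -
        PowerSeries.mk (fun s => if ∃ x1 x2 : ℕ, s = x1 * d1 + x2 * d2 then (1:ℚ) else 0) := by
    ext t
    rw [map_sum, map_sub, coeff_mk, coeff_mk]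
    simp only [coeff_X_pow]
    rw [Finset.sum_ite_eq hfin.toFinset t (fun _ => (1:ℚ))]
    by_cases ht : t ∈ hfin.toFinset
    · rw [if_pos ht]
      have : ¬ ∃ x1 x2 : ℕ, t = x1 * d1 + x2 * d2 := by
        simpa using (Set.Finite.mem_toFinset hfin).mp ht
      rw [if_neg this]; ring
    · rw [if_neg ht]
      have : ∃ x1 x2 : ℕ, t = x1 * d1 + x2 * d2 := by
        by_contra hcon
        exact ht ((Set.Finite.mem_toFinset hfin).mpr hcon)
      rw [if_pos this]; ring
  rw [hD]
  have hT1 : (1 - (PowerSeries.X : ℚ⟦X⟧)) * PowerSeries.mk (fun s => (1:ℚ)) = 1 := by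
    have := auxT 1 Nat.one_pos
    simpa using this
  have hT2 := auxT d2 h2
  have hG := auxG d1 d2
  have hR := auxR d1 d2 h1 h2 hcop
  set T1 := PowerSeries.mk (fun s => (1:ℚ))
  set T2 := PowerSeries.mk (fun s => if d2 ∣ s then (1:ℚ) else 0)
  set R := PowerSeries.mk (fun s => if ∃ x1 x2 : ℕ, s = x1 * d1 + x2 * d2 then (1:ℚ) else 0)
  set G := ∑ a ∈ Finset.range d2, (PowerSeries.X : ℚ⟦X⟧) ^ (a * d1)
  linear_combination ((1 - PowerSeries.X ^ d1) * (1 - PowerSeries.X ^ d2)) * hT1 -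
    ((1 - PowerSeries.X) * (1 - PowerSeries.X ^ d1) * (1 - PowerSeries.X ^ d2)) * hR -
    ((1 - PowerSeries.X) * (1 - PowerSeries.X ^ d1) * G) * hT2 - (1 - PowerSeries.X) * hG

lemma keyIdent (d1 d2 : ℕ) (h1 : 0 < d1) (h2 : 0 < d2) (hcop : Nat.gcd d1 d2 = 1)
    (hfin : {s : ℕ | ¬ ∃ x1 x2 : ℕ, s = x1 * d1 + x2 * d2}.Finite) :
    (PowerSeries.C ((d1 : ℚ) * (d2 : ℚ))) * (PowerSeries.X ^ 2 * (∑ s ∈ hfin.toFinset, exp ℚ ^ s))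
      + (PowerSeries.C ((d1 : ℚ) * (d2 : ℚ))) * (PowerSeries.X * bernoulliPowerSeries ℚ)
      = (exp ℚ ^ (d1 * d2) * rescale (d1 : ℚ) (bernoulliPowerSeries ℚ)) *
          rescale (d2 : ℚ) (bernoulliPowerSeries ℚ)
        - rescale (d1 : ℚ) (bernoulliPowerSeries ℚ) * rescale (d2 : ℚ) (bernoulliPowerSeries ℚ) := by
  set e := exp ℚ with he
  set B := bernoulliPowerSeries ℚ with hBdef
  set B1 := rescale (d1 : ℚ) B with hB1def
  set B2 := rescale (d2 : ℚ) B with hB2def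
  set D := ∑ s ∈ hfin.toFinset, e ^ s with hDdef
  set c1 := PowerSeries.C (d1 : ℚ) with hc1
  set c2 := PowerSeries.C (d2 : ℚ) with hc2
  -- exponential master identity
  have EM : D * ((1 - e) * (1 - e ^ d1) * (1 - e ^ d2)) =
      (1 - e ^ d1) * (1 - e ^ d2) - (1 - e ^ (d1 * d2)) * (1 - e) := by
    have := congrArg (Polynomial.aeval e) (polyIdent d1 d2 h1 h2 hcop hfin)
    simpa only [map_mul, map_sub, map_one, map_pow, map_sum, Polynomial.aeval_X] using this
  have hB : B * (e - 1) = PowerSeries.X := bernoulliPowerSeries_mul_exp_sub_one ℚ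
  have hB1 : B1 * (e ^ d1 - 1) = c1 * PowerSeries.X := by
    have := congrArg (rescale (d1 : ℚ)) hB
    rw [map_mul, map_sub, map_one, rescale_X] at this
    rw [hB1def, exp_pow_eq_rescale_exp]
    exact this
  have hB2 : B2 * (e ^ d2 - 1) = c2 * PowerSeries.X := by
    have := congrArg (rescale (d2 : ℚ)) hB
    rw [map_mul, map_sub, map_one, rescale_X] at this
    rw [hB2def, exp_pow_eq_rescale_exp]
    exact this
  have step1 : D * ((1 - e) * B) * ((1 - e ^ d1) * B1) * ((1 - e ^ d2) * B2) =
      ((1 - e ^ d1) * B1) * ((1 - e ^ d2) * B2) * B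
        - (1 - e ^ (d1 * d2)) * ((1 - e) * B) * (B1 * B2) := by
    linear_combination (B * B1 * B2) * EM
  have m1 : (1 - e) * B = -PowerSeries.X := by linear_combination -hB
  have m2 : (1 - e ^ d1) * B1 = -(c1 * PowerSeries.X) := by linear_combination -hB1
  have m3 : (1 - e ^ d2) * B2 = -(c2 * PowerSeries.X) := by linear_combination -hB2
  rw [m1, m2, m3] at step1
  have goal0 : PowerSeries.X * (c1 * c2 * (PowerSeries.X ^ 2 * D)
      + c1 * c2 * (PowerSeries.X * B)
      - ((e ^ (d1 * d2) * B1) * B2 - B1 * B2)) = 0 := by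
    linear_combination -step1
  have hW := (mul_eq_zero.mp goal0).resolve_left PowerSeries.X_ne_zero
  have hc : c1 * c2 = PowerSeries.C ((d1 : ℚ) * (d2 : ℚ)) := by
    rw [hc1, hc2, ← map_mul]
  linear_combination hW - (PowerSeries.X ^ 2 * D + PowerSeries.X * B) * hc

lemma coeffB (j : ℕ) : (PowerSeries.coeff j) (bernoulliPowerSeries ℚ) = bernoulli j / j ! := by
  simp [bernoulliPowerSeries, coeff_mk]

lemma coeffBr (d : ℕ) (j : ℕ) :
    (PowerSeries.coeff j) (rescale (d : ℚ) (bernoulliPowerSeries ℚ)) =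
      (d : ℚ) ^ j * (bernoulli j / j !) := by
  rw [coeff_rescale, coeffB]

lemma coeffExpPow (m : ℕ) (k : ℕ) :
    (PowerSeries.coeff k) (exp ℚ ^ m) = (m : ℚ) ^ k * (1 / k !) := by
  rw [exp_pow_eq_rescale_exp, coeff_rescale, coeff_exp]
  simp

-- extraction
lemma extracted (d1 d2 : ℕ) (h1 : 0 < d1) (h2 : 0 < d2) (hcop : Nat.gcd d1 d2 = 1)
    (hfin : {s : ℕ | ¬ ∃ x1 x2 : ℕ, s = x1 * d1 + x2 * d2}.Finite) (n : ℕ) :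
    ((d1 : ℚ) * (d2 : ℚ)) * ((∑ s ∈ hfin.toFinset, (s : ℚ) ^ n) * (1 / n !))
      + ((d1 : ℚ) * (d2 : ℚ)) * (bernoulli (n + 1) / (n + 1)!)
      = (∑ j ∈ Finset.range (n + 3),
          (∑ k ∈ Finset.range (j + 1),
            ((d1 : ℚ) * (d2 : ℚ)) ^ k * (1 / k !) * ((d1 : ℚ) ^ (j - k) * (bernoulli (j - k) / (j - k)!)))
            * ((d2 : ℚ) ^ (n + 2 - j) * (bernoulli (n + 2 - j) / (n + 2 - j)!)))
        - (∑ j ∈ Finset.range (n + 3),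
            ((d1 : ℚ) ^ j * (bernoulli j / j !)) * ((d2 : ℚ) ^ (n + 2 - j) * (bernoulli (n + 2 - j) / (n + 2 - j)!))) := by
  have KIc := congrArg (PowerSeries.coeff (n + 2)) (keyIdent d1 d2 h1 h2 hcop hfin)
  rw [map_add, map_sub, coeff_C_mul, coeff_C_mul, coeff_X_pow_mul] at KIc
  rw [show n + 2 = (n + 1) + 1 from rfl, coeff_succ_X_mul, coeffB] at KIc
  rw [map_sum] at KIc
  have hD : ∀ s ∈ hfin.toFinset, (PowerSeries.coeff n) (exp ℚ ^ s) = (s : ℚ) ^ n * (1 / n !) :=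
    fun s _ => coeffExpPow s n
  rw [Finset.sum_congr rfl hD, ← Finset.sum_mul] at KIc
  -- product coefficients
  rw [PowerSeries.coeff_mul, PowerSeries.coeff_mul,
    Finset.Nat.sum_antidiagonal_eq_sum_range_succ_mk,
    Finset.Nat.sum_antidiagonal_eq_sum_range_succ_mk] at KIc
  have hinner : ∀ j, (PowerSeries.coeff j) (exp ℚ ^ (d1 * d2) * rescale (d1 : ℚ) (bernoulliPowerSeries ℚ))
      = ∑ k ∈ Finset.range (j + 1),
          ((d1 : ℚ) * (d2 : ℚ)) ^ k * (1 / k !) * ((d1 : ℚ) ^ (j - k) * (bernoulli (j - k) / (j - k)!)) := by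
    intro j
    rw [PowerSeries.coeff_mul, Finset.Nat.sum_antidiagonal_eq_sum_range_succ_mk]
    refine Finset.sum_congr rfl fun k _ => ?_
    rw [coeffExpPow, coeffBr]
    push_cast
    ring
  simp only [hinner, coeffBr] at KIc
  convert KIc using 2 <;> norm_num

theorem power_sum_two_generators_second_order_bernoulli (d1 d2 : ℕ)
    (h1 : 1 < d1) (h12 : d1 < d2) (hcop : Nat.gcd d1 d2 = 1)
    (hfin : {s : ℕ | ¬ ∃ x1 x2 : ℕ, s = x1 * d1 + x2 * d2}.Finite) (n : ℕ) :
    ∑ s ∈ hfin.toFinset, (s : ℚ) ^ n =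
      -bernoulli (n + 1) / ((n : ℚ) + 1) -
        (1 / ((d1 : ℚ) * (d2 : ℚ) * ((n : ℚ) + 1) * ((n : ℚ) + 2))) *
          ((∑ j ∈ Finset.range (n + 3), ∑ k ∈ Finset.range (j + 1),
              ((n + 2).choose j : ℚ) * (j.choose k : ℚ) * (d1 : ℚ) ^ (j - k) *
                (d2 : ℚ) ^ (n + 2 - j) * bernoulli (j - k) * bernoulli (n + 2 - j) *
                (0 : ℚ) ^ k) -
            (∑ j ∈ Finset.range (n + 3), ∑ k ∈ Finset.range (j + 1),
              ((n + 2).choose j : ℚ) * (j.choose k : ℚ) * (d1 : ℚ) ^ (j - k) *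
                (d2 : ℚ) ^ (n + 2 - j) * bernoulli (j - k) * bernoulli (n + 2 - j) *
                ((d1 : ℚ) * (d2 : ℚ)) ^ k)) := by
  have h1' : 0 < d1 := by omega
  have h2' : 0 < d2 := by omega
  have key := extracted d1 d2 h1' h2' hcop hfin n
  have hd1 : (d1 : ℚ) ≠ 0 := Nat.cast_ne_zero.mpr (by omega)
  have hd2 : (d2 : ℚ) ≠ 0 := Nat.cast_ne_zero.mpr (by omega)
  have hnf : ((n ! : ℕ) : ℚ) ≠ 0 := Nat.cast_ne_zero.mpr (Nat.factorial_ne_zero n)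
  have hn1 : ((n : ℚ) + 1) ≠ 0 := by positivity
  have hn2 : ((n : ℚ) + 2) ≠ 0 := by positivity
  -- rewrite the two statement sums
  have hsum1 : (∑ j ∈ Finset.range (n + 3), ∑ k ∈ Finset.range (j + 1),
      ((n + 2).choose j : ℚ) * (j.choose k : ℚ) * (d1 : ℚ) ^ (j - k) *
        (d2 : ℚ) ^ (n + 2 - j) * bernoulli (j - k) * bernoulli (n + 2 - j) * (0 : ℚ) ^ k)
      = ((n + 2)! : ℚ) * (∑ j ∈ Finset.range (n + 3),
          ((d1 : ℚ) ^ j * (bernoulli j / j !)) * ((d2 : ℚ) ^ (n + 2 - j) * (bernoulli (n + 2 - j) / (n + 2 - j)!))) := by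
    rw [Finset.mul_sum]
    refine Finset.sum_congr rfl fun j hj => ?_
    have hjN : j ≤ n + 2 := by have := Finset.mem_range.mp hj; omega
    rw [Finset.sum_eq_single 0]
    · have hjf : ((j ! : ℕ) : ℚ) ≠ 0 := Nat.cast_ne_zero.mpr (Nat.factorial_ne_zero j)
      have hjf2 : (((n + 2 - j)! : ℕ) : ℚ) ≠ 0 := Nat.cast_ne_zero.mpr (Nat.factorial_ne_zero _)
      rw [Nat.cast_choose ℚ hjN]
      simp only [Nat.choose_zero_right, Nat.sub_zero, Nat.cast_one, pow_zero]
      field_simp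
    · intro k _ hk
      rw [zero_pow hk, mul_zero]
    · intro h; exact absurd (Finset.mem_range.mpr (by omega)) h
  have hsum2 : (∑ j ∈ Finset.range (n + 3), ∑ k ∈ Finset.range (j + 1),
      ((n + 2).choose j : ℚ) * (j.choose k : ℚ) * (d1 : ℚ) ^ (j - k) *
        (d2 : ℚ) ^ (n + 2 - j) * bernoulli (j - k) * bernoulli (n + 2 - j) * ((d1 : ℚ) * (d2 : ℚ)) ^ k)
      = ((n + 2)! : ℚ) * (∑ j ∈ Finset.range (n + 3),
          (∑ k ∈ Finset.range (j + 1),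
            ((d1 : ℚ) * (d2 : ℚ)) ^ k * (1 / k !) * ((d1 : ℚ) ^ (j - k) * (bernoulli (j - k) / (j - k)!)))
            * ((d2 : ℚ) ^ (n + 2 - j) * (bernoulli (n + 2 - j) / (n + 2 - j)!))) := by
    rw [Finset.mul_sum]
    refine Finset.sum_congr rfl fun j hj => ?_
    have hjN : j ≤ n + 2 := by have := Finset.mem_range.mp hj; omega
    rw [Finset.sum_mul, Finset.mul_sum]
    refine Finset.sum_congr rfl fun k hk => ?_
    have hkj : k ≤ j := by have := Finset.mem_range.mp hk; omega
    have hkf : ((k ! : ℕ) : ℚ) ≠ 0 := Nat.cast_ne_zero.mpr (Nat.factorial_ne_zero _)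
    have hjkf : (((j - k)! : ℕ) : ℚ) ≠ 0 := Nat.cast_ne_zero.mpr (Nat.factorial_ne_zero _)
    have hNjf : (((n + 2 - j)! : ℕ) : ℚ) ≠ 0 := Nat.cast_ne_zero.mpr (Nat.factorial_ne_zero _)
    rw [Nat.cast_choose ℚ hjN, Nat.cast_choose ℚ hkj]
    field_simp
  rw [hsum1, hsum2]
  have hfac1 : (((n + 1)! : ℕ) : ℚ) = ((n : ℚ) + 1) * (n ! : ℚ) := by
    rw [Nat.factorial_succ]; push_cast; ring
  have hfac2 : (((n + 2)! : ℕ) : ℚ) = ((n : ℚ) + 2) * (((n : ℚ) + 1) * (n ! : ℚ)) := by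
    rw [Nat.factorial_succ, Nat.factorial_succ]; push_cast; ring
  rw [hfac1] at key
  rw [hfac2]
  set S := ∑ s ∈ hfin.toFinset, (s : ℚ) ^ n
  set E4 := ∑ j ∈ Finset.range (n + 3),
          (∑ k ∈ Finset.range (j + 1),
            ((d1 : ℚ) * (d2 : ℚ)) ^ k * (1 / k !) * ((d1 : ℚ) ^ (j - k) * (bernoulli (j - k) / (j - k)!)))
            * ((d2 : ℚ) ^ (n + 2 - j) * (bernoulli (n + 2 - j) / (n + 2 - j)!))
  set E3 := ∑ j ∈ Finset.range (n + 3),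
            ((d1 : ℚ) ^ j * (bernoulli j / j !)) * ((d2 : ℚ) ^ (n + 2 - j) * (bernoulli (n + 2 - j) / (n + 2 - j)!))
  field_simp at key
  have key3 : (d1 : ℚ) * (d2 : ℚ) * S * ((n : ℚ) + 1) + (d1 : ℚ) * (d2 : ℚ) * bernoulli (n + 1)
      = (E4 - E3) * (((n : ℚ) + 1) * (n ! : ℚ)) := by
    apply mul_right_cancel₀ hnf
    linear_combination (n ! : ℚ) * key
  field_simp
  linear_combination key3
end

section
/- Let S(d1,d2,d3) be a numerical semigroup (gcd(d1,d2,d3)=1) whose Hilbert series is H(z) = Q(z)/((1−z^{d1})(1−z^{d2})(1−z^{d3})) where Q(z) = Σ_α c_α z^{e_α} is a finite sum with integer coefficients. Then for every n ≥ 0, the n-th power sum of the gaps is g_n = −B_{n+1}/(n+1) + (n!/((n+3)!·d1 d2 d3))·Σ_α c_α·B_{n+3}^{(3)}(e_α | d1,d2,d3). -/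
open PowerSeries in
open scoped Classical in
theorem power_sum_gaps_general_numerator {ι : Type*} (A : Finset ι) (c : ι → ℤ) (e : ι → ℕ)
    (d1 d2 d3 : ℕ) (h1 : 1 < d1) (h12 : d1 < d2) (h23 : d2 < d3)
    (hgcd : Nat.gcd d1 (Nat.gcd d2 d3) = 1)
    (hfin : {s : ℕ | ¬ ∃ x1 x2 x3 : ℕ, s = x1 * d1 + x2 * d2 + x3 * d3}.Finite)
    (hH : (PowerSeries.mk fun s =>
          if ∃ x1 x2 x3 : ℕ, s = x1 * d1 + x2 * d2 + x3 * d3 then (1 : ℚ) else 0) *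
        ((1 - X ^ d1) * (1 - X ^ d2) * (1 - X ^ d3)) =
      ∑ α ∈ A, PowerSeries.C ((c α : ℚ)) * X ^ (e α))
    (B3 : ℕ → ℚ → ℚ)
    (hB3 : ∀ x : ℚ, ((rescale (d1 : ℚ) (exp ℚ) - 1) * (rescale (d2 : ℚ) (exp ℚ) - 1) *
          (rescale (d3 : ℚ) (exp ℚ) - 1)) *
        PowerSeries.mk (fun n => B3 n x / n.factorial) =
      PowerSeries.C ((d1 : ℚ) * (d2 : ℚ) * (d3 : ℚ)) * (X ^ 3 * rescale x (exp ℚ)))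
    (n : ℕ) :
    ∑ s ∈ hfin.toFinset, (s : ℚ) ^ n =
      -bernoulli (n + 1) / ((n : ℚ) + 1) +
        ((n.factorial : ℚ) / (((n + 3).factorial : ℚ) * ((d1 : ℚ) * (d2 : ℚ) * (d3 : ℚ)))) *
          ∑ α ∈ A, (c α : ℚ) * B3 (n + 3) ((e α : ℚ)) := by
  -- abbreviations
  set d : ℚ := (d1 : ℚ) * (d2 : ℚ) * (d3 : ℚ) with hd
  set P : PowerSeries ℚ := (rescale (d1 : ℚ) (exp ℚ) - 1) * (rescale (d2 : ℚ) (exp ℚ) - 1) *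
      (rescale (d3 : ℚ) (exp ℚ) - 1) with hP
  set Gt : PowerSeries ℚ := ∑ s ∈ hfin.toFinset, rescale (s : ℚ) (exp ℚ) with hGt
  set Qt : PowerSeries ℚ := ∑ α ∈ A, PowerSeries.C ((c α : ℚ)) * rescale ((e α : ℚ)) (exp ℚ)
    with hQt
  set M : PowerSeries ℚ := ∑ α ∈ A, PowerSeries.C ((c α : ℚ)) *
      PowerSeries.mk (fun m => B3 m (e α) / m.factorial) with hM
  have hdpos : (0 : ℚ) < d := by
    have h1' : 0 < d1 := by omega
    have h2' : 0 < d2 := by omega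
    have h3' : 0 < d3 := by omega
    rw [hd]
    positivity
  -- step 1 : indicator series = (full series) - (gap series)
  have hmk : (PowerSeries.mk fun s =>
      if ∃ x1 x2 x3 : ℕ, s = x1 * d1 + x2 * d2 + x3 * d3 then (1 : ℚ) else 0)
      = PowerSeries.mk (fun _ => (1:ℚ)) - ∑ s ∈ hfin.toFinset, (X : PowerSeries ℚ) ^ s := by
    ext k
    have hco : (coeff k) (∑ s ∈ hfin.toFinset, (X : PowerSeries ℚ) ^ s)
        = if k ∈ hfin.toFinset then (1:ℚ) else 0 := by
      rw [map_sum]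
      simp [PowerSeries.coeff_X_pow, eq_comm]
    have hmem : k ∈ hfin.toFinset ↔ ¬ ∃ x1 x2 x3 : ℕ, k = x1 * d1 + x2 * d2 + x3 * d3 :=
      Set.Finite.mem_toFinset _
    simp only [map_sub, coeff_mk, hco]
    by_cases hk : ∃ x1 x2 x3 : ℕ, k = x1 * d1 + x2 * d2 + x3 * d3
    · rw [if_pos hk, if_neg (by rw [hmem]; exact not_not_intro hk)]; ring
    · rw [if_neg hk, if_pos (hmem.mpr hk)]; ring
  have hone : ((1 : PowerSeries ℚ) - X) * PowerSeries.mk (fun _ => (1:ℚ)) = 1 := by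
    ext k
    cases k with
    | zero => simp
    | succ m => simp [sub_mul, coeff_succ_X_mul, PowerSeries.coeff_one]
  -- step 2 : polynomial identity
  set pZ : Polynomial ℚ := (1 - Polynomial.X ^ d1) * (1 - Polynomial.X ^ d2) *
      (1 - Polynomial.X ^ d3) with hpZ
  set qZ : Polynomial ℚ := ∑ α ∈ A, Polynomial.C ((c α : ℚ)) * Polynomial.X ^ (e α) with hqZ
  set gZ : Polynomial ℚ := ∑ s ∈ hfin.toFinset, Polynomial.X ^ s with hgZ
  have hpoly : pZ = (1 - Polynomial.X) * qZ + (1 - Polynomial.X) * gZ * pZ := by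
    have hinj : Function.Injective (Polynomial.coeToPowerSeries.ringHom (R := ℚ)) := by
      intro a b hab
      rw [Polynomial.coeToPowerSeries.ringHom_apply, Polynomial.coeToPowerSeries.ringHom_apply]
        at hab
      exact Polynomial.coe_inj.mp hab
    apply hinj
    rw [hpZ, hqZ, hgZ]
    simp only [map_mul, map_add, map_sub, map_one, map_pow, map_sum,
      Polynomial.coeToPowerSeries.ringHom_apply, Polynomial.coe_X, Polynomial.coe_C]
    rw [← hH]
    linear_combination (-((1:PowerSeries ℚ) - X) * ((1 - X^d1)*(1-X^d2)*(1-X^d3))) * hmk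
      - ((1 - (X:PowerSeries ℚ)^d1)*(1-X^d2)*(1-X^d3)) * hone
  -- step 3 : substitute X ↦ exp
  have hexp : -P = (1 - exp ℚ) * Qt + (1 - exp ℚ) * Gt * (-P) := by
    have := congrArg (Polynomial.aeval (exp ℚ)) hpoly
    rw [hpZ, hqZ, hgZ] at this
    simp only [map_mul, map_add, map_sub, map_one, map_pow, map_sum, Polynomial.aeval_X,
      Polynomial.aeval_C, PowerSeries.algebraMap_apply, Algebra.algebraMap_self_apply,
      exp_pow_eq_rescale_exp] at this
    rw [hP, hQt, hGt]
    linear_combination this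
  -- step 4 : bring in Bernoulli numbers
  have hPid : P = (exp ℚ - 1) * Qt - (exp ℚ - 1) * Gt * P := by linear_combination -hexp
  have hb := bernoulliPowerSeries_mul_exp_sub_one ℚ
  have h2 : bernoulliPowerSeries ℚ * P = X * Qt - X * Gt * P := by
    linear_combination (bernoulliPowerSeries ℚ) * hPid + (Qt - Gt * P) * hb
  have hQ : PowerSeries.C d * X ^ 3 * Qt = P * M := by
    rw [hQt, hM, Finset.mul_sum, Finset.mul_sum]
    refine Finset.sum_congr rfl fun α _ => ?_
    have h := hB3 ((e α : ℚ))
    calc PowerSeries.C d * X ^ 3 * (PowerSeries.C ((c α : ℚ)) * rescale ((e α : ℚ)) (exp ℚ))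
        = PowerSeries.C ((c α : ℚ)) *
          (PowerSeries.C d * (X ^ 3 * rescale ((e α : ℚ)) (exp ℚ))) := by ring
      _ = PowerSeries.C ((c α : ℚ)) * (P * PowerSeries.mk fun m => B3 m (e α) / m.factorial) :=
          by rw [h]
      _ = P * (PowerSeries.C ((c α : ℚ)) * PowerSeries.mk fun m => B3 m (e α) / m.factorial) :=
          by ring
  have key : P * M = P * (PowerSeries.C d * (bernoulliPowerSeries ℚ * X ^ 2) +
      PowerSeries.C d * (Gt * X ^ 3)) := by
    linear_combination -hQ - (PowerSeries.C d * X ^ 2) * h2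
  have hPne : P ≠ 0 := by
    intro h0
    have h := hB3 0
    rw [h0, zero_mul] at h
    apply_fun (coeff 3) at h
    simp [PowerSeries.coeff_C_mul, PowerSeries.coeff_X_pow_mul', coeff_rescale, coeff_exp] at h
    exact hdpos.ne' h.symm
  have hMid : M = PowerSeries.C d * (bernoulliPowerSeries ℚ * X ^ 2) +
      PowerSeries.C d * (Gt * X ^ 3) := mul_left_cancel₀ hPne key
  -- step 5 : extract coefficients
  have hb1 : coeff (n + 3) (bernoulliPowerSeries ℚ * X ^ 2)
      = bernoulli (n + 1) / ((n + 1).factorial : ℚ) := by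
    rw [show n + 3 = n + 1 + 2 by ring, PowerSeries.coeff_mul_X_pow]
    simp [bernoulliPowerSeries]
  have hg1 : coeff (n + 3) (Gt * X ^ 3)
      = (∑ s ∈ hfin.toFinset, (s : ℚ) ^ n) * (1 / (n.factorial : ℚ)) := by
    rw [PowerSeries.coeff_mul_X_pow, hGt, map_sum, Finset.sum_mul]
    refine Finset.sum_congr rfl fun s _ => ?_
    rw [coeff_rescale, coeff_exp]
    simp
  have hco := congrArg (coeff (n + 3)) hMid
  rw [hM, map_sum, map_add, PowerSeries.coeff_C_mul, PowerSeries.coeff_C_mul, hb1, hg1] at hco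
  simp only [PowerSeries.coeff_C_mul, coeff_mk] at hco
  -- step 6 : arithmetic
  have hsum : ∑ α ∈ A, (c α : ℚ) * (B3 (n + 3) ((e α : ℚ)) / ((n + 3).factorial : ℚ))
      = (∑ α ∈ A, (c α : ℚ) * B3 (n + 3) ((e α : ℚ))) / ((n + 3).factorial : ℚ) := by
    rw [Finset.sum_div]
    exact Finset.sum_congr rfl fun α _ => by ring
  rw [hsum] at hco
  have hfn : (n.factorial : ℚ) ≠ 0 := by exact_mod_cast n.factorial_ne_zero
  have hfn3 : ((n + 3).factorial : ℚ) ≠ 0 := by exact_mod_cast (n + 3).factorial_ne_zero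
  have hfs : ((n + 1).factorial : ℚ) = ((n : ℚ) + 1) * (n.factorial : ℚ) := by
    rw [Nat.factorial_succ]; push_cast; ring
  have hn1 : ((n : ℚ) + 1) ≠ 0 := by positivity
  have hd0 : d ≠ 0 := ne_of_gt hdpos
  rw [hfs] at hco
  set T : ℚ := ∑ α ∈ A, (c α : ℚ) * B3 (n + 3) ((e α : ℚ)) with hT
  set S : ℚ := ∑ s ∈ hfin.toFinset, (s : ℚ) ^ n with hS
  clear_value d T S
  field_simp at hco
  have hco2 : T * (((n : ℚ) + 1) * (n.factorial : ℚ))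
      = (d * bernoulli (n + 1) + d * S * ((n : ℚ) + 1)) * ((n + 3).factorial : ℚ) := by
    apply mul_left_cancel₀ hfn
    linear_combination (n.factorial : ℚ) * hco
  field_simp
  linear_combination -hco2
end

section
/- Let d1,d2,d3 generate a symmetric numerical semigroup with a13 = a23 = 0 in the minimal relation matrix, so a11 d1 = a22 d2. Then for every n ≥ 0, the n-th power sum of the gaps equals g_n = −B_{n+1}/(n+1) + (n!/((n+3)!·d1d2d3))·[B_{n+3}^{(3)}(0|d³) − B_{n+3}^{(3)}(a22 d2|d³) − B_{n+3}^{(3)}(a33 d3|d³) + B_{n+3}^{(3)}(a22 d2 + a33 d3|d³)]. -/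
open PowerSeries in
open scoped Classical in
theorem power_sum_gaps_symmetric (d1 d2 d3 a11 a22 a33 : ℕ)
    (h1 : 1 < d1) (h12 : d1 < d2) (h23 : d2 < d3)
    (hgcd : Nat.gcd d1 (Nat.gcd d2 d3) = 1)
    (ha : a11 * d1 = a22 * d2)
    (hfin : {s : ℕ | ¬ ∃ x1 x2 x3 : ℕ, s = x1 * d1 + x2 * d2 + x3 * d3}.Finite)
    (hH : (PowerSeries.mk fun s =>
          if ∃ x1 x2 x3 : ℕ, s = x1 * d1 + x2 * d2 + x3 * d3 then (1 : ℚ) else 0) *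
        ((1 - X ^ d1) * (1 - X ^ d2) * (1 - X ^ d3)) =
      (1 - X ^ (a22 * d2)) * (1 - X ^ (a33 * d3)))
    (B3 : ℕ → ℚ → ℚ)
    (hB3 : ∀ x : ℚ, ((rescale (d1 : ℚ) (exp ℚ) - 1) * (rescale (d2 : ℚ) (exp ℚ) - 1) *
          (rescale (d3 : ℚ) (exp ℚ) - 1)) *
        PowerSeries.mk (fun n => B3 n x / n.factorial) =
      PowerSeries.C ((d1 : ℚ) * (d2 : ℚ) * (d3 : ℚ)) * (X ^ 3 * rescale x (exp ℚ)))
    (n : ℕ) :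
    ∑ s ∈ hfin.toFinset, (s : ℚ) ^ n =
      -bernoulli (n + 1) / ((n : ℚ) + 1) +
        ((n.factorial : ℚ) / (((n + 3).factorial : ℚ) * ((d1 : ℚ) * (d2 : ℚ) * (d3 : ℚ)))) *
          (B3 (n + 3) 0 - B3 (n + 3) ((a22 * d2 : ℕ) : ℚ) - B3 (n + 3) ((a33 * d3 : ℕ) : ℚ) +
            B3 (n + 3) ((a22 * d2 + a33 * d3 : ℕ) : ℚ)) := by
  classical
  -- step 1: indicator decomposition
  have h1' : (PowerSeries.mk fun s =>
        if ∃ x1 x2 x3 : ℕ, s = x1 * d1 + x2 * d2 + x3 * d3 then (1 : ℚ) else 0)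
      + (∑ s ∈ hfin.toFinset, (X : ℚ⟦X⟧) ^ s) = PowerSeries.mk (fun _ => (1:ℚ)) := by
    ext k
    simp only [map_add, coeff_mk, map_sum, coeff_X_pow, Finset.sum_ite_eq,
      Set.Finite.mem_toFinset, Set.mem_setOf_eq]
    split_ifs <;> simp_all
  have h2' : (PowerSeries.mk fun _ => (1:ℚ)) * (1 - X) = 1 := by
    ext k
    cases k <;> simp [mul_sub, coeff_succ_mul_X, coeff_zero_mul_X, coeff_one, coeff_mk]
  have hone : ((PowerSeries.mk fun s =>
        if ∃ x1 x2 x3 : ℕ, s = x1 * d1 + x2 * d2 + x3 * d3 then (1 : ℚ) else 0)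
      + (∑ s ∈ hfin.toFinset, (X : ℚ⟦X⟧) ^ s)) * (1 - X) = 1 := by rw [h1', h2']
  have hstar : (∑ s ∈ hfin.toFinset, (X : ℚ⟦X⟧) ^ s) *
      ((1 - X) * ((1 - X ^ d1) * (1 - X ^ d2) * (1 - X ^ d3))) =
      (1 - X ^ d1) * (1 - X ^ d2) * (1 - X ^ d3)
        - (1 - X) * ((1 - X ^ (a22 * d2)) * (1 - X ^ (a33 * d3))) := by
    linear_combination ((1 - X ^ d1) * (1 - X ^ d2) * (1 - (X:ℚ⟦X⟧) ^ d3)) * hone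
      - (1 - (X:ℚ⟦X⟧)) * hH
  -- step 2: polynomial identity
  have hpoly : (∑ s ∈ hfin.toFinset, (Polynomial.X : Polynomial ℚ) ^ s) *
      ((1 - Polynomial.X) * ((1 - Polynomial.X ^ d1) * (1 - Polynomial.X ^ d2) *
        (1 - Polynomial.X ^ d3))) =
      (1 - Polynomial.X ^ d1) * (1 - Polynomial.X ^ d2) * (1 - Polynomial.X ^ d3)
        - (1 - Polynomial.X) * ((1 - Polynomial.X ^ (a22 * d2)) *
          (1 - Polynomial.X ^ (a33 * d3))) := by
    rw [← Polynomial.coe_inj]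
    have hcs : ((∑ s ∈ hfin.toFinset, (Polynomial.X : Polynomial ℚ) ^ s : Polynomial ℚ) : ℚ⟦X⟧)
        = ∑ s ∈ hfin.toFinset, (X : ℚ⟦X⟧) ^ s := by
      rw [← Polynomial.coeToPowerSeries.ringHom_apply, map_sum]
      simp [Polynomial.coeToPowerSeries.ringHom_apply, Polynomial.coe_pow, Polynomial.coe_X]
    simp only [Polynomial.coe_mul, Polynomial.coe_sub, Polynomial.coe_one, Polynomial.coe_pow,
      Polynomial.coe_X, hcs]
    exact hstar
  -- step 3: substitute exp
  have haeval := congrArg (Polynomial.aeval (exp ℚ) : Polynomial ℚ → ℚ⟦X⟧) hpoly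
  simp only [map_mul, map_sub, map_one, map_pow, map_sum, Polynomial.aeval_X,
    exp_pow_eq_rescale_exp] at haeval
  -- auxiliary facts
  have hABr : rescale ((a22 * d2 + a33 * d3 : ℕ) : ℚ) (exp ℚ)
      = rescale ((a22 * d2 : ℕ) : ℚ) (exp ℚ) * rescale ((a33 * d3 : ℕ) : ℚ) (exp ℚ) := by
    rw [← exp_pow_eq_rescale_exp, ← exp_pow_eq_rescale_exp, ← exp_pow_eq_rescale_exp, pow_add]
  have h0r : rescale (0 : ℚ) (exp ℚ) = 1 := by
    rw [rescale_zero]; simp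
  have hM0 := hB3 0
  rw [h0r, mul_one] at hM0
  have hMA := hB3 ((a22 * d2 : ℕ) : ℚ)
  have hMB := hB3 ((a33 * d3 : ℕ) : ℚ)
  have hMAB := hB3 ((a22 * d2 + a33 * d3 : ℕ) : ℚ)
  rw [hABr] at hMAB
  have hres : ∀ c : ℚ, c ≠ 0 → rescale c (exp ℚ) - 1 ≠ 0 := by
    intro c hc h
    have h2 := congrArg (coeff 1) h
    simp [coeff_rescale, coeff_exp] at h2
    exact hc h2
  have hexp1 : exp ℚ - 1 ≠ 0 := by
    have := hres 1 one_ne_zero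
    rwa [rescale_one, RingHom.id_apply] at this
  have hd1 : (d1 : ℚ) ≠ 0 := Nat.cast_ne_zero.mpr (by omega)
  have hd2 : (d2 : ℚ) ≠ 0 := Nat.cast_ne_zero.mpr (by omega)
  have hd3 : (d3 : ℚ) ≠ 0 := Nat.cast_ne_zero.mpr (by omega)
  have hne : (exp ℚ - 1) * ((rescale (d1 : ℚ) (exp ℚ) - 1) * (rescale (d2 : ℚ) (exp ℚ) - 1) *
      (rescale (d3 : ℚ) (exp ℚ) - 1)) ≠ 0 :=
    mul_ne_zero hexp1 (mul_ne_zero (mul_ne_zero (hres _ hd1) (hres _ hd2)) (hres _ hd3))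
  have hBn := bernoulliPowerSeries_mul_exp_sub_one ℚ
  have key : PowerSeries.C ((d1 : ℚ) * (d2 : ℚ) * (d3 : ℚ)) *
      (X ^ 3 * (∑ s ∈ hfin.toFinset, rescale (s : ℚ) (exp ℚ))) =
      -(PowerSeries.C ((d1 : ℚ) * (d2 : ℚ) * (d3 : ℚ)) * (X ^ 2 * bernoulliPowerSeries ℚ))
      + ((PowerSeries.mk fun m => B3 m 0 / m.factorial)
         - (PowerSeries.mk fun m => B3 m ((a22 * d2 : ℕ) : ℚ) / m.factorial)
         - (PowerSeries.mk fun m => B3 m ((a33 * d3 : ℕ) : ℚ) / m.factorial)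
         + (PowerSeries.mk fun m => B3 m ((a22 * d2 + a33 * d3 : ℕ) : ℚ) / m.factorial)) := by
    apply mul_left_cancel₀ hne
    linear_combination (PowerSeries.C ((d1 : ℚ) * (d2 : ℚ) * (d3 : ℚ)) * X ^ 3) * haeval
      + (PowerSeries.C ((d1 : ℚ) * (d2 : ℚ) * (d3 : ℚ)) * X ^ 2 *
          ((rescale (d1 : ℚ) (exp ℚ) - 1) * (rescale (d2 : ℚ) (exp ℚ) - 1) *
            (rescale (d3 : ℚ) (exp ℚ) - 1))) * hBn
      - (exp ℚ - 1) * (hM0 - hMA - hMB + hMAB)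
  -- step 4: extract coefficients
  have c1 : coeff (n + 3) (X ^ 3 * (∑ s ∈ hfin.toFinset, rescale (s : ℚ) (exp ℚ)))
      = coeff n (∑ s ∈ hfin.toFinset, rescale (s : ℚ) (exp ℚ)) :=
    coeff_X_pow_mul _ 3 n
  have c2 : coeff (n + 3) (X ^ 2 * bernoulliPowerSeries ℚ)
      = coeff (n + 1) (bernoulliPowerSeries ℚ) := by
    have h := coeff_X_pow_mul (bernoulliPowerSeries ℚ) 2 (n + 1)
    rw [show n + 1 + 2 = n + 3 from by omega] at h
    exact h
  have hsum2 : coeff n (∑ s ∈ hfin.toFinset, rescale (s : ℚ) (exp ℚ))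
      = (∑ s ∈ hfin.toFinset, (s : ℚ) ^ n) * (1 / n.factorial) := by
    rw [map_sum, Finset.sum_mul]
    refine Finset.sum_congr rfl fun s _ => ?_
    rw [coeff_rescale, coeff_exp]
    push_cast [Algebra.algebraMap_self, RingHom.id_apply]
    ring
  have hcoeff := congrArg (coeff (n + 3)) key
  simp only [map_add, map_sub, map_neg, coeff_C_mul] at hcoeff
  rw [c1, c2, hsum2] at hcoeff
  simp only [coeff_mk, bernoulliPowerSeries, Algebra.algebraMap_self, RingHom.id_apply] at hcoeff
  have hfn : (n.factorial : ℚ) ≠ 0 := Nat.cast_ne_zero.mpr n.factorial_ne_zero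
  have hfn3 : (((n + 3).factorial : ℕ) : ℚ) ≠ 0 := Nat.cast_ne_zero.mpr (n + 3).factorial_ne_zero
  have hfn1 : (((n + 1).factorial : ℕ) : ℚ) = ((n : ℚ) + 1) * n.factorial := by
    rw [Nat.factorial_succ]; push_cast; ring
  have hn1 : ((n : ℚ) + 1) ≠ 0 := by positivity
  rw [hfn1] at hcoeff
  linear_combination (norm := (field_simp; ring1)) ((n.factorial : ℚ) / ((d1 : ℚ) * d2 * d3)) * hcoeff
end
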